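/- arXiv:1912.00160 — 5 statements merged into one kernel-verified Lean document; each statement's English description precedes it below -/
import Mathlib

section
/- Define K_n := ∫_0^∞ (ln(1+x))^n e^{-x} dx for n ≥ 0. Then K_{n+1}/K_n = (ln(n+1)) · (1 + o(1)) as n → ∞; that is, the quotient (K_{n+1}/K_n) / ln(n+1) tends to 1 as n → ∞. -/
open MeasureTheory Filter Topology Real

open Set

noncomputable def fI (n : ℕ) (x : ℝ) : ℝ := (Real.log (1 + x)) ^ n * Real.exp (-x)

lemma fI_nonneg {n : ℕ} {x : ℝ} (hx : 0 ≤ x) : 0 ≤ fI n x := by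
  have h1 : 0 ≤ Real.log (1 + x) := Real.log_nonneg (by linarith)
  unfold fI; positivity

lemma fI_contOn (n : ℕ) : ContinuousOn (fI n) (Ici (-1/2 : ℝ)) := by
  apply ContinuousOn.mul
  · apply ContinuousOn.pow
    apply ContinuousOn.log (by fun_prop)
    intro x hx; simp only [mem_Ici] at hx; nlinarith
  · fun_prop

lemma fI_integrableOn (n : ℕ) : IntegrableOn (fI n) (Ioi (0:ℝ)) := by
  have hdom : IntegrableOn (fun x : ℝ => Real.exp (-x) * x ^ ((n:ℝ) + 1 - 1)) (Ioi 0) :=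
    Real.GammaIntegral_convergent (by positivity)
  apply Integrable.mono' hdom
  · exact ((fI_contOn n).mono (fun x hx => le_of_lt (by simpa using lt_of_le_of_lt (by norm_num : (-1/2:ℝ) ≤ 0) (mem_Ioi.mp hx)))).aestronglyMeasurable measurableSet_Ioi
  · filter_upwards [ae_restrict_mem measurableSet_Ioi] with x hx
    have hx0 : 0 < x := hx
    have hlog0 : 0 ≤ Real.log (1 + x) := Real.log_nonneg (by linarith)
    have hlog : Real.log (1 + x) ≤ x := by
      have := Real.log_le_sub_one_of_pos (show (0:ℝ) < 1 + x by linarith)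
      linarith
    have : |fI n x| = Real.log (1+x) ^ n * Real.exp (-x) := by
      rw [abs_of_nonneg (fI_nonneg hx0.le)]; rfl
    rw [Real.norm_eq_abs, this]
    have hpow : Real.log (1+x) ^ n ≤ x ^ n := pow_le_pow_left₀ hlog0 hlog n
    have hrw : x ^ ((n:ℝ) + 1 - 1) = x ^ n := by
      rw [show (n:ℝ) + 1 - 1 = (n:ℝ) by ring, Real.rpow_natCast]
    rw [hrw]
    nlinarith [Real.exp_pos (-x), Real.exp_le_one_iff.mpr (by linarith : -x ≤ 0)]

lemma fI_setInt_le (n : ℕ) {s : Set ℝ} (hs : s ⊆ Ioi (0:ℝ)) (hsm : MeasurableSet s) :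
    ∫ x in s, fI n x ≤ ∫ x in Ioi (0:ℝ), fI n x := by
  apply setIntegral_mono_set (fI_integrableOn n)
  · filter_upwards [ae_restrict_mem measurableSet_Ioi] with x hx using fI_nonneg (le_of_lt hx)
  · exact HasSubset.Subset.eventuallyLE hs

lemma K_lower (n : ℕ) {a : ℝ} (ha : 0 ≤ a) :
    (Real.log (1 + a)) ^ n * Real.exp (-(a+1)) ≤ ∫ x in Ioi (0:ℝ), fI n x := by
  have h1 : ∫ x in Ioc a (a+1), fI n x ≤ ∫ x in Ioi (0:ℝ), fI n x :=
    fI_setInt_le n (fun x hx => lt_of_le_of_lt ha (lt_of_lt_of_le hx.1 le_rfl)) measurableSet_Ioc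
  refine le_trans ?_ h1
  have h2 := setIntegral_ge_of_const_le (μ := volume) (f := fI n) (s := Ioc a (a+1))
    (c := (Real.log (1 + a)) ^ n * Real.exp (-(a+1))) measurableSet_Ioc
    (by simp) ?_ ((fI_integrableOn n).mono_set
      (fun x hx => lt_of_le_of_lt ha hx.1))
  · calc (Real.log (1 + a)) ^ n * Real.exp (-(a+1))
        = (volume.real (Ioc a (a+1))) • ((Real.log (1 + a)) ^ n * Real.exp (-(a+1))) := by
          simp
      _ ≤ _ := h2
  · intro x hx
    have hx1 : a < x := hx.1
    have hx2 : x ≤ a + 1 := hx.2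
    have hlog : Real.log (1 + a) ≤ Real.log (1 + x) :=
      Real.log_le_log (by linarith) (by linarith)
    have h0 : 0 ≤ Real.log (1 + a) := Real.log_nonneg (by linarith)
    have hexp : Real.exp (-(a+1)) ≤ Real.exp (-x) := Real.exp_le_exp.mpr (by linarith)
    exact mul_le_mul (pow_le_pow_left₀ h0 hlog n) hexp (Real.exp_pos _).le (pow_nonneg (h0.trans hlog) n)

lemma K_pos (n : ℕ) : 0 < ∫ x in Ioi (0:ℝ), fI n x := by
  refine lt_of_lt_of_le ?_ (K_lower n (a := 1) zero_le_one)
  have : (0:ℝ) < Real.log 2 := Real.log_pos (by norm_num)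
  have h2 : Real.log (1 + 1) = Real.log 2 := by norm_num
  rw [h2]; positivity

lemma integral_exp_half (c : ℝ) : ∫ x in Ioi c, Real.exp (-((x - c)/2)) = 2 := by
  have heq : ∀ x : ℝ, Real.exp (-((x - c)/2)) = Real.exp (c/2) * Real.exp (-((1:ℝ)/2)*x) := by
    intro x; rw [← Real.exp_add]; ring_nf
  have hint : IntegrableOn (fun x : ℝ => Real.exp (-((x - c)/2))) (Ioi c) := by
    have h := (exp_neg_integrableOn_Ioi c (b := (1:ℝ)/2) (by norm_num)).const_mul (Real.exp (c/2))
    exact IntegrableOn.congr_fun h (fun x _ => (heq x).symm) measurableSet_Ioi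
  have hderiv : ∀ x ∈ Ici c, HasDerivAt (fun x : ℝ => -2 * Real.exp (-((x - c)/2)))
      (Real.exp (-((x - c)/2))) x := by
    intro x _
    have h1 : HasDerivAt (fun x : ℝ => -((x - c)/2)) (-(1/2)) x := by
      exact (((hasDerivAt_id x).sub_const c).div_const 2).neg
    have h2 := (Real.hasDerivAt_exp (-((x - c)/2))).comp x h1
    exact (h2.const_mul (-2)).congr_deriv (by ring)
  have htends : Tendsto (fun x : ℝ => -2 * Real.exp (-((x - c)/2))) atTop (𝓝 0) := by
    rw [show (0:ℝ) = -2 * 0 by ring]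
    apply Tendsto.const_mul
    apply Real.tendsto_exp_atBot.comp
    have h1 : Tendsto (fun x : ℝ => (x - c)/2) atTop atTop := by
      apply Tendsto.atTop_div_const (by norm_num)
      exact tendsto_atTop_add_const_right _ (-c) tendsto_id |>.congr (fun x => by simp [sub_eq_add_neg, add_comm])
    exact tendsto_neg_atBot_iff.mpr h1
  rw [integral_Ioi_of_hasDerivAt_of_tendsto' hderiv hint htends]
  simp

lemma exp_half_integrable (c : ℝ) :
    IntegrableOn (fun x : ℝ => Real.exp (-((x - c)/2))) (Ioi c) := by
  have heq : ∀ x : ℝ, Real.exp (-((x - c)/2)) = Real.exp (c/2) * Real.exp (-((1:ℝ)/2)*x) := by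
    intro x; rw [← Real.exp_add]; ring_nf
  have h := (exp_neg_integrableOn_Ioi c (b := (1:ℝ)/2) (by norm_num)).const_mul (Real.exp (c/2))
  exact IntegrableOn.congr_fun h (fun x _ => (heq x).symm) measurableSet_Ioi

lemma tail_bound (n : ℕ) (hn : 2 ≤ Real.log (1 + (n:ℝ))) :
    ∫ x in Ioi (n:ℝ), fI (n+1) x
      ≤ 2 * (Real.log (1+(n:ℝ)))^(n+1) * Real.exp (-(n:ℝ)) := by
  set p := Real.log (1 + (n:ℝ)) with hp
  have hn1 : (0:ℝ) < 1 + n := by positivity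
  have hpt : ∀ x ∈ Ioi (n:ℝ), fI (n+1) x
      ≤ p^(n+1) * Real.exp (-(n:ℝ)) * Real.exp (-((x - n)/2)) := by
    intro x hx
    have hx' : (n:ℝ) < x := hx
    set q := Real.log (1 + x) with hq
    have hpq : p ≤ q := Real.log_le_log hn1 (by linarith)
    have hppos : (0:ℝ) < p := by linarith
    have hqpos : (0:ℝ) < q := by linarith
    have step1 : (q - p) * (1 + n) ≤ x - n := by
      have h1 : q - p = Real.log ((1+x)/(1+n)) := (Real.log_div (by linarith) (by linarith)).symm
      have h2 : Real.log ((1+x)/(1+n)) ≤ (1+x)/(1+n) - 1 :=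
        Real.log_le_sub_one_of_pos (div_pos (by linarith) hn1)
      have h3 : q - p ≤ (x - n)/(1+n) := by
        rw [h1]
        calc Real.log ((1+x)/(1+n)) ≤ (1+x)/(1+n) - 1 := h2
          _ = (x - n)/(1+n) := by field_simp; ring
      calc (q - p) * (1+n) ≤ ((x-n)/(1+n)) * (1+n) := by
            exact mul_le_mul_of_nonneg_right h3 hn1.le
        _ = x - n := by field_simp
    have step2 : (Real.log q - Real.log p) * p ≤ q - p := by
      have h1 : Real.log q - Real.log p = Real.log (q/p) := (Real.log_div hqpos.ne' hppos.ne').symm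
      have h2 : Real.log (q/p) ≤ q/p - 1 := Real.log_le_sub_one_of_pos (div_pos hqpos hppos)
      have h3 : Real.log q - Real.log p ≤ (q-p)/p := by
        rw [h1]
        calc Real.log (q/p) ≤ q/p - 1 := h2
          _ = (q-p)/p := by field_simp
      calc (Real.log q - Real.log p) * p ≤ ((q-p)/p) * p := mul_le_mul_of_nonneg_right h3 hppos.le
        _ = q - p := by field_simp
    have hD : (0:ℝ) ≤ Real.log q - Real.log p := by
      have := Real.log_le_log hppos hpq; linarith
    have step3 : ((n:ℝ)+1) * Real.log q ≤ ((n:ℝ)+1) * Real.log p + (x - n)/2 := by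
      nlinarith [mul_le_mul_of_nonneg_right step2 hn1.le,
        mul_le_mul_of_nonneg_right hn (le_of_lt (mul_pos (by positivity : (0:ℝ) < 1 + (n:ℝ)) hqpos)),
        mul_nonneg hD (by linarith : (0:ℝ) ≤ p - 2),
        mul_nonneg (mul_nonneg hD (by linarith : (0:ℝ) ≤ p - 2)) hn1.le]
    have hqpow : q^(n+1) ≤ p^(n+1) * Real.exp ((x - n)/2) := by
      have e1 : q^(n+1) = Real.exp (((n:ℝ)+1) * Real.log q) := by
        rw [← Real.rpow_natCast q (n+1), Real.rpow_def_of_pos hqpos]; push_cast; ring_nf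
      have e2 : p^(n+1) = Real.exp (((n:ℝ)+1) * Real.log p) := by
        rw [← Real.rpow_natCast p (n+1), Real.rpow_def_of_pos hppos]; push_cast; ring_nf
      rw [e1, e2, ← Real.exp_add]
      exact Real.exp_le_exp.mpr step3
    calc fI (n+1) x = q^(n+1) * Real.exp (-x) := rfl
      _ ≤ (p^(n+1) * Real.exp ((x-n)/2)) * Real.exp (-x) :=
          mul_le_mul_of_nonneg_right hqpow (Real.exp_pos _).le
      _ = p^(n+1) * Real.exp (-(n:ℝ)) * Real.exp (-((x - n)/2)) := by
          rw [mul_assoc, mul_assoc, ← Real.exp_add, ← Real.exp_add]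
          ring_nf
  have hintR : IntegrableOn
      (fun x : ℝ => p^(n+1) * Real.exp (-(n:ℝ)) * Real.exp (-((x - (n:ℝ))/2))) (Ioi (n:ℝ)) :=
    (exp_half_integrable (n:ℝ)).const_mul _
  have hintL : IntegrableOn (fI (n+1)) (Ioi (n:ℝ)) :=
    (fI_integrableOn (n+1)).mono_set (fun x hx => lt_of_le_of_lt (by positivity : (0:ℝ) ≤ n) hx)
  calc ∫ x in Ioi (n:ℝ), fI (n+1) x
      ≤ ∫ x in Ioi (n:ℝ), p^(n+1) * Real.exp (-(n:ℝ)) * Real.exp (-((x - n)/2)) :=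
        setIntegral_mono_on hintL hintR measurableSet_Ioi hpt
    _ = p^(n+1) * Real.exp (-(n:ℝ)) * ∫ x in Ioi (n:ℝ), Real.exp (-((x - n)/2)) := by
        rw [integral_const_mul]
    _ = 2 * p^(n+1) * Real.exp (-(n:ℝ)) := by
        rw [integral_exp_half]; ring

lemma exp_integrableOn_Ioi (c : ℝ) :
    IntegrableOn (fun x : ℝ => Real.exp (-x)) (Ioi c) := by
  have h := exp_neg_integrableOn_Ioi c (b := (1:ℝ)) one_pos
  exact IntegrableOn.congr_fun h (fun x _ => by norm_num) measurableSet_Ioi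

lemma upper_split (n : ℕ) : ∫ x in Ioi (0:ℝ), fI (n+1) x
    ≤ Real.log (1+(n:ℝ)) * (∫ x in Ioi (0:ℝ), fI n x) + ∫ x in Ioi (n:ℝ), fI (n+1) x := by
  have hsplit : (∫ x in Ioi (0:ℝ), fI (n+1) x)
      = (∫ x in Ioc (0:ℝ) n, fI (n+1) x) + ∫ x in Ioi (n:ℝ), fI (n+1) x := by
    rw [← setIntegral_union (Ioc_disjoint_Ioi le_rfl) measurableSet_Ioi
      ((fI_integrableOn (n+1)).mono_set Ioc_subset_Ioi_self)
      ((fI_integrableOn (n+1)).mono_set (fun x hx => lt_of_le_of_lt (by positivity : (0:ℝ) ≤ n) hx)),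
      Ioc_union_Ioi_eq_Ioi n.cast_nonneg]
  rw [hsplit]
  have hL : (0:ℝ) ≤ Real.log (1+(n:ℝ)) := Real.log_nonneg (by simp)
  have h1 : (∫ x in Ioc (0:ℝ) n, fI (n+1) x)
      ≤ Real.log (1+(n:ℝ)) * ∫ x in Ioi (0:ℝ), fI n x := by
    calc (∫ x in Ioc (0:ℝ) n, fI (n+1) x)
        ≤ ∫ x in Ioc (0:ℝ) n, Real.log (1+(n:ℝ)) * fI n x := by
          apply setIntegral_mono_on
            ((fI_integrableOn (n+1)).mono_set Ioc_subset_Ioi_self)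
            (((fI_integrableOn n).mono_set Ioc_subset_Ioi_self).const_mul _)
            measurableSet_Ioc
          intro x hx
          have hx1 : 0 < x := hx.1
          have hx2 : x ≤ n := hx.2
          have hlog : Real.log (1+x) ≤ Real.log (1+(n:ℝ)) := Real.log_le_log (by linarith) (by linarith)
          have h0 : 0 ≤ Real.log (1+x) := Real.log_nonneg (by linarith)
          calc fI (n+1) x = Real.log (1+x) * fI n x := by
                unfold fI; rw [pow_succ]; ring
            _ ≤ Real.log (1+(n:ℝ)) * fI n x :=
                mul_le_mul_of_nonneg_right hlog (fI_nonneg hx1.le)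
      _ = Real.log (1+(n:ℝ)) * ∫ x in Ioc (0:ℝ) n, fI n x := integral_const_mul _ _
      _ ≤ Real.log (1+(n:ℝ)) * ∫ x in Ioi (0:ℝ), fI n x := by
          apply mul_le_mul_of_nonneg_left _ hL
          exact fI_setInt_le n Ioc_subset_Ioi_self measurableSet_Ioc
  exact add_le_add h1 le_rfl

lemma lower_split (n : ℕ) {b : ℝ} (hb : 0 < b) :
    Real.log (1+b) * ((∫ x in Ioi (0:ℝ), fI n x) - (Real.log (1+b))^n)
      ≤ ∫ x in Ioi (0:ℝ), fI (n+1) x := by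
  set Lb := Real.log (1+b) with hLb
  have hLbpos : 0 < Lb := Real.log_pos (by linarith)
  have h1 : (∫ x in Ioi b, fI (n+1) x) ≤ ∫ x in Ioi (0:ℝ), fI (n+1) x :=
    fI_setInt_le (n+1) (fun x hx => lt_trans hb hx) measurableSet_Ioi
  have h2 : Lb * (∫ x in Ioi b, fI n x) ≤ ∫ x in Ioi b, fI (n+1) x := by
    rw [← integral_const_mul]
    apply setIntegral_mono_on
      (((fI_integrableOn n).mono_set (fun x hx => lt_trans hb hx)).const_mul _)
      ((fI_integrableOn (n+1)).mono_set (fun x hx => lt_trans hb hx))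
      measurableSet_Ioi
    intro x hx
    have hx' : b < x := hx
    have hlog : Lb ≤ Real.log (1+x) := Real.log_le_log (by linarith) (by linarith)
    calc Lb * fI n x ≤ Real.log (1+x) * fI n x :=
          mul_le_mul_of_nonneg_right hlog (fI_nonneg (by linarith))
      _ = fI (n+1) x := by unfold fI; rw [pow_succ]; ring
  have h3 : (∫ x in Ioi (0:ℝ), fI n x)
      = (∫ x in Ioc (0:ℝ) b, fI n x) + ∫ x in Ioi b, fI n x := by
    rw [← setIntegral_union (Ioc_disjoint_Ioi le_rfl) measurableSet_Ioi
      ((fI_integrableOn n).mono_set Ioc_subset_Ioi_self)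
      ((fI_integrableOn n).mono_set (fun x hx => lt_trans hb hx)),
      Ioc_union_Ioi_eq_Ioi hb.le]
  have h4 : (∫ x in Ioc (0:ℝ) b, fI n x) ≤ Lb^n := by
    calc (∫ x in Ioc (0:ℝ) b, fI n x)
        ≤ ∫ x in Ioc (0:ℝ) b, Lb^n * Real.exp (-x) := by
          apply setIntegral_mono_on
            ((fI_integrableOn n).mono_set Ioc_subset_Ioi_self)
            (((exp_integrableOn_Ioi 0).mono_set Ioc_subset_Ioi_self).const_mul _)
            measurableSet_Ioc
          intro x hx
          have hx1 : 0 < x := hx.1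
          have hlog : Real.log (1+x) ≤ Lb := Real.log_le_log (by linarith) (by linarith [hx.2])
          have h0 : 0 ≤ Real.log (1+x) := Real.log_nonneg (by linarith)
          exact mul_le_mul_of_nonneg_right (pow_le_pow_left₀ h0 hlog n) (Real.exp_pos _).le
      _ = Lb^n * ∫ x in Ioc (0:ℝ) b, Real.exp (-x) := integral_const_mul _ _
      _ ≤ Lb^n * 1 := by
          apply mul_le_mul_of_nonneg_left _ (by positivity)
          rw [← integral_exp_neg_Ioi_zero]
          apply setIntegral_mono_set (exp_integrableOn_Ioi 0)
          · filter_upwards with x using (Real.exp_pos _).le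
          · exact HasSubset.Subset.eventuallyLE Ioc_subset_Ioi_self
      _ = Lb^n := mul_one _
  have h5 : (∫ x in Ioi (0:ℝ), fI n x) - Lb^n ≤ ∫ x in Ioi b, fI n x := by linarith
  calc Lb * ((∫ x in Ioi (0:ℝ), fI n x) - Lb^n) ≤ Lb * ∫ x in Ioi b, fI n x :=
        mul_le_mul_of_nonneg_left h5 hLbpos.le
    _ ≤ ∫ x in Ioi b, fI (n+1) x := h2
    _ ≤ _ := h1

-- basic limits over ℕ
lemma hlogn : Tendsto (fun n:ℕ => Real.log n) atTop atTop :=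
  Real.tendsto_log_atTop.comp tendsto_natCast_atTop_atTop

lemma hloglog : Tendsto (fun n:ℕ => Real.log (Real.log n)) atTop atTop :=
  Real.tendsto_log_atTop.comp hlogn

lemma hlog_div : Tendsto (fun n:ℕ => Real.log (Real.log n) / Real.log n) atTop (𝓝 0) :=
  (Real.isLittleO_log_id_atTop.tendsto_div_nhds_zero).comp hlogn

lemma hinvlog : Tendsto (fun n:ℕ => 1 / Real.log n) atTop (𝓝 0) :=
  tendsto_const_nhds.div_atTop hlogn

lemma hdivlog : Tendsto (fun n:ℕ => (n:ℝ) / Real.log n) atTop atTop := by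
  have h1 : Tendsto (fun n:ℕ => Real.log n / (n:ℝ)) atTop (𝓝 0) :=
    (Real.isLittleO_log_id_atTop.tendsto_div_nhds_zero).comp tendsto_natCast_atTop_atTop
  have h2 : Tendsto (fun n:ℕ => Real.log n / (n:ℝ)) atTop (𝓝[>] 0) := by
    rw [tendsto_nhdsWithin_iff]
    refine ⟨h1, ?_⟩
    filter_upwards [hlogn.eventually_gt_atTop 0, tendsto_natCast_atTop_atTop.eventually_gt_atTop (0:ℝ)]
      with n h1 h2 using div_pos h1 h2
  have := h2.inv_tendsto_nhdsGT_zero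
  apply this.congr
  intro n; simp [div_eq_mul_inv, mul_comm]

noncomputable def aa (n : ℕ) : ℝ := (n:ℝ) / Real.log n
noncomputable def bb (n : ℕ) : ℝ := (n:ℝ) / (Real.log n)^2
noncomputable def LA (n : ℕ) : ℝ := Real.log (1 + aa n)
noncomputable def LB (n : ℕ) : ℝ := Real.log (1 + bb n)
noncomputable def pp (n : ℕ) : ℝ := Real.log (1 + (n:ℝ))

structure Facts (n : ℕ) : Prop where
  hl2 : 2 ≤ Real.log n
  hll2 : 2 ≤ Real.log (Real.log n)
  hllhalf : Real.log (Real.log n) ≤ Real.log n / 2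
  ha1 : 1 ≤ aa n
  hb1 : 1 ≤ bb n
  hba : bb n ≤ aa n
  han : aa n ≤ (n:ℝ)
  hn2 : (2:ℝ) ≤ (n:ℝ)
  hn32 : (32:ℝ) ≤ (n:ℝ)
  hltn : Real.log n ≤ (n:ℝ)/8

lemma facts_eventually : ∀ᶠ n:ℕ in atTop, Facts n := by
  have e1 := hlogn.eventually_ge_atTop 2
  have e2 := hloglog.eventually_ge_atTop 2
  have e3 : ∀ᶠ n:ℕ in atTop, Real.log (Real.log n) ≤ Real.log n / 2 := by
    filter_upwards [hlog_div.eventually (eventually_le_nhds (show (0:ℝ) < 1/2 by norm_num)),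
      hlogn.eventually_gt_atTop 0] with n h1 h2
    rw [div_le_iff₀ h2] at h1; linarith [h1]
  have e4 : ∀ᶠ n:ℕ in atTop, (Real.log n)^2 ≤ (n:ℝ) := by
    have h := (Real.isLittleO_pow_log_id_atTop (n := 2)).bound one_pos
    have h2 : ∀ᶠ x:ℝ in atTop, (Real.log x)^2 ≤ x := by
      filter_upwards [h, eventually_ge_atTop (1:ℝ)] with x hx hx1
      have hl0 : 0 ≤ Real.log x := Real.log_nonneg hx1
      rw [Real.norm_eq_abs, Real.norm_eq_abs, abs_of_nonneg (by positivity : (0:ℝ) ≤ Real.log x ^ 2),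
        one_mul, id, abs_of_nonneg (by linarith : (0:ℝ) ≤ x)] at hx
      exact hx
    exact tendsto_natCast_atTop_atTop.eventually h2
  have e5 := hdivlog.eventually_ge_atTop 8
  have e6 := tendsto_natCast_atTop_atTop.eventually_ge_atTop (2:ℝ)
  have e7 := tendsto_natCast_atTop_atTop.eventually_ge_atTop (32:ℝ)
  filter_upwards [e1, e2, e3, e4, e5, e6, e7] with n h1 h2 h3 h4 h5 h6 h7
  have hlpos : (0:ℝ) < Real.log n := by linarith
  have hnpos : (0:ℝ) < (n:ℝ) := by linarith
  refine ⟨h1, h2, h3, ?_, ?_, ?_, ?_, h6, h7, ?_⟩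
  · rw [aa, le_div_iff₀ hlpos]; nlinarith
  · rw [bb, le_div_iff₀ (by positivity)]; linarith
  · rw [aa, bb]
    apply div_le_div_of_nonneg_left hnpos.le hlpos
    nlinarith
  · rw [aa]
    apply div_le_self hnpos.le (by linarith)
  · rw [le_div_iff₀ hlpos] at h5
    rw [le_div_iff₀ (by norm_num : (0:ℝ) < 8)]
    nlinarith

structure Derived (n : ℕ) : Prop where
  hLApos : 0 < LA n
  hLBpos : 0 < LB n
  hpppos : 0 < pp n
  d1a : Real.log n ≤ pp n
  d1b : pp n ≤ Real.log n + 1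
  d2 : Real.log n - Real.log (Real.log n) ≤ LA n
  d2' : Real.log n / 2 ≤ LA n
  d3 : LA n ≤ pp n
  d4 : Real.log n - 2*Real.log (Real.log n) ≤ LB n
  d5 : LB n ≤ LA n
  d7 : Real.log (Real.log n) - Real.log 2 ≤ LA n - LB n
  d8 : (LA n - LB n)/(LA n) ≤ Real.log (LA n) - Real.log (LB n)
  d9 : Real.log (pp n) - Real.log (LA n) ≤ (pp n - LA n)/(LA n)
  d10 : pp n - LA n ≤ Real.log (Real.log n) + 1
  d11 : Real.log (pp n) ≤ Real.log (Real.log n) + 1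

lemma derived_of_facts {n : ℕ} (F : Facts n) : Derived n := by
  obtain ⟨hl2, hll2, hllhalf, ha1, hb1, hba, han, hn2, hn32, hltn⟩ := F
  have hlpos : (0:ℝ) < Real.log n := by linarith
  have hnpos : (0:ℝ) < (n:ℝ) := by linarith
  have hapos : (0:ℝ) < aa n := by linarith
  have hbpos : (0:ℝ) < bb n := by linarith
  have hlog2 : Real.log 2 < 1 := by
    have := Real.log_two_lt_d9; linarith
  have hlog2pos : (0:ℝ) < Real.log 2 := Real.log_pos (by norm_num)
  -- log of aa and bb
  have hla : Real.log (aa n) = Real.log n - Real.log (Real.log n) := by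
    rw [aa, Real.log_div hnpos.ne' hlpos.ne']
  have hlb : Real.log (bb n) = Real.log n - 2*Real.log (Real.log n) := by
    rw [bb, Real.log_div hnpos.ne' (by positivity), Real.log_pow]
    push_cast; ring
  have hLAge : Real.log (aa n) ≤ LA n := Real.log_le_log hapos (by linarith)
  have hLBge : Real.log (bb n) ≤ LB n := Real.log_le_log hbpos (by linarith)
  have hLAle : LA n ≤ pp n := Real.log_le_log (by linarith) (by linarith)
  have hLBle : LB n ≤ LA n := Real.log_le_log (by linarith) (by linarith)
  have hLBlog2 : Real.log 2 ≤ LB n := Real.log_le_log (by norm_num) (by linarith)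
  have hLBpos : 0 < LB n := lt_of_lt_of_le hlog2pos hLBlog2
  have hLApos : 0 < LA n := lt_of_lt_of_le hLBpos hLBle
  have hd2 : Real.log n - Real.log (Real.log n) ≤ LA n := by rw [← hla]; exact hLAge
  have hd2' : Real.log n / 2 ≤ LA n := by linarith
  have hd4 : Real.log n - 2*Real.log (Real.log n) ≤ LB n := by rw [← hlb]; exact hLBge
  have hd1a : Real.log n ≤ pp n := Real.log_le_log hnpos (by linarith)
  have hd1b : pp n ≤ Real.log n + 1 := by
    have h1 : pp n ≤ Real.log (2*n) := Real.log_le_log (by linarith) (by linarith)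
    rw [Real.log_mul (by norm_num) hnpos.ne'] at h1
    linarith
  have hpppos : 0 < pp n := lt_of_lt_of_le hlpos hd1a
  -- d7 : LA - LB ≥ log a - log (2b)
  have hLBle2b : LB n ≤ Real.log (2*bb n) := Real.log_le_log (by linarith) (by linarith)
  have h2b : Real.log (2*bb n) = Real.log 2 + Real.log (bb n) :=
    Real.log_mul (by norm_num) hbpos.ne'
  have hd7 : Real.log (Real.log n) - Real.log 2 ≤ LA n - LB n := by
    have := hLAge
    rw [hla] at this
    rw [h2b, hlb] at hLBle2b
    linarith
  -- d8
  have hd8 : (LA n - LB n)/(LA n) ≤ Real.log (LA n) - Real.log (LB n) := by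
    have h1 : Real.log (LB n / LA n) ≤ LB n / LA n - 1 :=
      Real.log_le_sub_one_of_pos (div_pos hLBpos hLApos)
    rw [Real.log_div hLBpos.ne' hLApos.ne'] at h1
    have h2 : (LA n - LB n)/(LA n) = 1 - LB n / LA n := by field_simp
    linarith
  -- d9
  have hd9 : Real.log (pp n) - Real.log (LA n) ≤ (pp n - LA n)/(LA n) := by
    have h1 : Real.log (pp n / LA n) ≤ pp n / LA n - 1 :=
      Real.log_le_sub_one_of_pos (div_pos hpppos hLApos)
    rw [Real.log_div hpppos.ne' hLApos.ne'] at h1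
    have h2 : (pp n - LA n)/(LA n) = pp n / LA n - 1 := by field_simp
    linarith
  have hd10 : pp n - LA n ≤ Real.log (Real.log n) + 1 := by linarith
  have hd11 : Real.log (pp n) ≤ Real.log (Real.log n) + 1 := by
    have h1 : Real.log (pp n) ≤ Real.log (2 * Real.log n) :=
      Real.log_le_log hpppos (by linarith)
    rw [Real.log_mul (by norm_num) hlpos.ne'] at h1
    linarith
  exact ⟨hLApos, hLBpos, hpppos, hd1a, hd1b, hd2, hd2', hLAle, hd4, hLBle, hd7, hd8, hd9, hd10, hd11⟩

lemma limEA : Tendsto (fun n:ℕ => (n:ℝ)*(Real.log (LA n) - Real.log (LB n)) - aa n - 1)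
    atTop atTop := by
  have hm : Tendsto (fun n:ℕ => (n:ℝ)/Real.log n *
      ((Real.log (Real.log n) - Real.log 2)/2 - 1) - 1) atTop atTop := by
    apply tendsto_atTop_add_const_right
    apply Tendsto.atTop_mul_atTop₀ hdivlog
    apply tendsto_atTop_add_const_right
    exact (tendsto_atTop_add_const_right _ _ hloglog).atTop_div_const (by norm_num)
  apply tendsto_atTop_mono' _ _ hm
  filter_upwards [facts_eventually] with n F
  obtain D := derived_of_facts F
  have hlpos : (0:ℝ) < Real.log n := by linarith [F.hl2]
  have hnn : (0:ℝ) ≤ (n:ℝ) := n.cast_nonneg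
  have hnum : 0 ≤ Real.log (Real.log n) - Real.log 2 := by
    have : Real.log 2 < 1 := by linarith [Real.log_two_lt_d9]
    linarith [F.hll2]
  have key : (Real.log (Real.log n) - Real.log 2)/(2*Real.log n)
      ≤ Real.log (LA n) - Real.log (LB n) := by
    refine le_trans ?_ D.d8
    exact div_le_div₀ (le_trans hnum D.d7) D.d7 D.hLApos (by linarith [D.d1b, D.d3, F.hl2])
  have h1 : (n:ℝ) * ((Real.log (Real.log n) - Real.log 2)/(2*Real.log n))
      ≤ (n:ℝ)*(Real.log (LA n) - Real.log (LB n)) :=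
    mul_le_mul_of_nonneg_left key hnn
  have h2 : (n:ℝ) * ((Real.log (Real.log n) - Real.log 2)/(2*Real.log n))
      = (n:ℝ)/Real.log n * ((Real.log (Real.log n) - Real.log 2)/2) := by
    rw [mul_div_assoc', div_mul_div_comm]; ring_nf
  rw [h2] at h1
  have haa : aa n = (n:ℝ)/Real.log n := rfl
  calc (n:ℝ)/Real.log n * ((Real.log (Real.log n) - Real.log 2)/2 - 1) - 1
      = (n:ℝ)/Real.log n * ((Real.log (Real.log n) - Real.log 2)/2) - (n:ℝ)/Real.log n - 1 := by
        ring
    _ ≤ (n:ℝ)*(Real.log (LA n) - Real.log (LB n)) - aa n - 1 := by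
        rw [haa]; linarith

lemma limEB : Tendsto (fun n:ℕ => ((n:ℝ)+1)*Real.log (pp n) - (n:ℝ)*Real.log (LA n)
    + aa n + 1 - (n:ℝ)) atTop atBot := by
  have hmodel : Tendsto (fun n:ℕ => -((3:ℝ)/8) * (n:ℝ)) atTop atBot :=
    Tendsto.const_mul_atTop_of_neg (by norm_num) tendsto_natCast_atTop_atTop
  apply tendsto_atBot_mono' _ _ hmodel
  have heps : Tendsto (fun n:ℕ => 2*(Real.log (Real.log n) + 1)/Real.log n + 1/Real.log n)
      atTop (𝓝 0) := by
    have h1 : Tendsto (fun n:ℕ => 2*(Real.log (Real.log n) + 1)/Real.log n) atTop (𝓝 0) := by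
      have : (fun n:ℕ => 2*(Real.log (Real.log n) + 1)/Real.log n)
          = fun n:ℕ => 2*(Real.log (Real.log n)/Real.log n) + 2*(1/Real.log n) := by
        funext n; field_simp
      rw [this]
      simpa using ((hlog_div.const_mul 2).add (hinvlog.const_mul 2))
    simpa using h1.add hinvlog
  filter_upwards [facts_eventually,
    heps.eventually (eventually_le_nhds (show (0:ℝ) < 1/2 by norm_num))] with n F heps'
  obtain D := derived_of_facts F
  have hlpos : (0:ℝ) < Real.log n := by linarith [F.hl2]
  have hnn : (0:ℝ) ≤ (n:ℝ) := n.cast_nonneg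
  have hnpos : (0:ℝ) < (n:ℝ) := by linarith [F.hn2]
  -- log pp - log LA ≤ 2 (loglog + 1)/log n
  have key : Real.log (pp n) - Real.log (LA n) ≤ 2*(Real.log (Real.log n)+1)/Real.log n := by
    refine le_trans D.d9 ?_
    have hnum : 0 ≤ pp n - LA n := by linarith [D.d3]
    calc (pp n - LA n)/(LA n) ≤ (Real.log (Real.log n)+1)/(Real.log n/2) :=
          div_le_div₀ (by linarith [D.d10, hnum]) D.d10 (by linarith [D.d2', F.hl2]) D.d2'
      _ = 2*(Real.log (Real.log n)+1)/Real.log n := by field_simp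
  have h1 : (n:ℝ) * (Real.log (pp n) - Real.log (LA n))
      ≤ (n:ℝ) * (2*(Real.log (Real.log n)+1)/Real.log n) :=
    mul_le_mul_of_nonneg_left key hnn
  have h2 : aa n = (n:ℝ) * (1/Real.log n) := by rw [aa]; ring
  have h3 : (n:ℝ) * (2*(Real.log (Real.log n)+1)/Real.log n) + (n:ℝ) * (1/Real.log n)
      ≤ (n:ℝ) * (1/2) := by
    rw [← mul_add]
    exact mul_le_mul_of_nonneg_left heps' hnn
  have h4 : Real.log (pp n) ≤ (n:ℝ)/16 + 1 := by
    have := D.d11; have := F.hllhalf; have := F.hltn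
    linarith
  calc ((n:ℝ)+1)*Real.log (pp n) - (n:ℝ)*Real.log (LA n) + aa n + 1 - (n:ℝ)
      = (n:ℝ)*(Real.log (pp n) - Real.log (LA n)) + Real.log (pp n) + aa n + 1 - (n:ℝ) := by
        ring
    _ ≤ (n:ℝ)*(1/2) + Real.log (pp n) + 1 - (n:ℝ) := by
        rw [h2] at *; linarith
    _ ≤ -((3:ℝ)/8) * (n:ℝ) := by
        have := F.hn32
        linarith

lemma limC : Tendsto (fun n:ℕ => LB n / pp n) atTop (𝓝 1) := by
  have hw : Tendsto (fun n:ℕ => (Real.log n - 2*Real.log (Real.log n))/(Real.log n + 1))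
      atTop (𝓝 1) := by
    have h1 : Tendsto (fun n:ℕ => (1 - 2*(Real.log (Real.log n)/Real.log n))/(1 + 1/Real.log n))
        atTop (𝓝 1) := by
      have hnum : Tendsto (fun n:ℕ => 1 - 2*(Real.log (Real.log n)/Real.log n)) atTop (𝓝 1) := by
        simpa using (tendsto_const_nhds (x := (1:ℝ))).sub (hlog_div.const_mul 2)
      have hden : Tendsto (fun n:ℕ => 1 + 1/Real.log n) atTop (𝓝 1) := by
        simpa using (tendsto_const_nhds (x := (1:ℝ))).add hinvlog
      simpa [Pi.div_def] using hnum.div hden (by norm_num)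
    apply h1.congr'
    filter_upwards [hlogn.eventually_gt_atTop 0] with n hl
    rw [div_eq_div_iff (by positivity) (by positivity)]
    field_simp
  apply tendsto_of_tendsto_of_tendsto_of_le_of_le' hw tendsto_const_nhds
  · filter_upwards [facts_eventually] with n F
    obtain D := derived_of_facts F
    exact div_le_div₀ D.hLBpos.le D.d4 D.hpppos D.d1b
  · filter_upwards [facts_eventually] with n F
    obtain D := derived_of_facts F
    rw [div_le_one D.hpppos]
    linarith [D.d5, D.d3]

noncomputable def Kn (n : ℕ) : ℝ := ∫ x in Ioi (0:ℝ), fI n x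

lemma LB_nonneg (n : ℕ) : 0 ≤ LB n :=
  Real.log_nonneg (by
    have : (0:ℝ) ≤ bb n := div_nonneg n.cast_nonneg (sq_nonneg _)
    linarith)

lemma limV : Tendsto (fun n:ℕ => (LB n)^n / Kn n) atTop (𝓝 0) := by
  have hexp : Tendsto (fun n:ℕ => Real.exp (-((n:ℝ)*(Real.log (LA n) - Real.log (LB n))
      - aa n - 1))) atTop (𝓝 0) :=
    Real.tendsto_exp_atBot.comp (tendsto_neg_atBot_iff.mpr limEA)
  apply squeeze_zero' _ _ hexp
  · filter_upwards with n
    exact div_nonneg (pow_nonneg (LB_nonneg n) n) (K_pos n).le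
  · filter_upwards [facts_eventually] with n F
    obtain D := derived_of_facts F
    have hapos : (0:ℝ) < aa n := by linarith [F.ha1]
    have hKlow : (LA n)^n * Real.exp (-(aa n + 1)) ≤ Kn n := K_lower n (a := aa n) hapos.le
    have hDpos : (0:ℝ) < (LA n)^n * Real.exp (-(aa n + 1)) :=
      mul_pos (pow_pos D.hLApos n) (Real.exp_pos _)
    calc (LB n)^n / Kn n ≤ (LB n)^n / ((LA n)^n * Real.exp (-(aa n + 1))) := by
          gcongr
          exact pow_nonneg D.hLBpos.le n
      _ = Real.exp (-((n:ℝ)*(Real.log (LA n) - Real.log (LB n)) - aa n - 1)) := by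
          rw [show (LB n)^n = Real.exp ((n:ℝ) * Real.log (LB n)) by
              rw [← Real.rpow_natCast (LB n) n, Real.rpow_def_of_pos D.hLBpos]; ring_nf,
            show (LA n)^n = Real.exp ((n:ℝ) * Real.log (LA n)) by
              rw [← Real.rpow_natCast (LA n) n, Real.rpow_def_of_pos D.hLApos]; ring_nf,
            ← Real.exp_add, ← Real.exp_sub]
          ring_nf

lemma limU : Tendsto (fun n:ℕ => (∫ x in Ioi (n:ℝ), fI (n+1) x) / Kn n) atTop (𝓝 0) := by
  have hexp : Tendsto (fun n:ℕ => 2 * Real.exp (((n:ℝ)+1)*Real.log (pp n)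
      - (n:ℝ)*Real.log (LA n) + aa n + 1 - (n:ℝ))) atTop (𝓝 0) := by
    simpa using (Real.tendsto_exp_atBot.comp limEB).const_mul 2
  apply squeeze_zero' _ _ hexp
  · filter_upwards with n
    apply div_nonneg _ (K_pos n).le
    apply setIntegral_nonneg measurableSet_Ioi
    intro x hx
    exact fI_nonneg (le_trans (n.cast_nonneg) (le_of_lt hx))
  · filter_upwards [facts_eventually] with n F
    obtain D := derived_of_facts F
    have hapos : (0:ℝ) < aa n := by linarith [F.ha1]
    have htail := tail_bound n (by show (2:ℝ) ≤ pp n; linarith [D.d1a, F.hl2])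
    have hKlow : (LA n)^n * Real.exp (-(aa n + 1)) ≤ Kn n := K_lower n (a := aa n) hapos.le
    have hDpos : (0:ℝ) < (LA n)^n * Real.exp (-(aa n + 1)) :=
      mul_pos (pow_pos D.hLApos n) (Real.exp_pos _)
    have htn : (0:ℝ) ≤ ∫ x in Ioi (n:ℝ), fI (n+1) x := by
      apply setIntegral_nonneg measurableSet_Ioi
      intro x hx
      exact fI_nonneg (le_trans (n.cast_nonneg) (le_of_lt hx))
    calc (∫ x in Ioi (n:ℝ), fI (n+1) x) / Kn n
        ≤ (2 * (pp n)^(n+1) * Real.exp (-(n:ℝ))) / ((LA n)^n * Real.exp (-(aa n + 1))) := by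
          apply div_le_div₀ _ _ hDpos hKlow
          · exact le_trans htn htail
          · exact htail
      _ = 2 * Real.exp (((n:ℝ)+1)*Real.log (pp n) - (n:ℝ)*Real.log (LA n) + aa n + 1 - (n:ℝ)) := by
          rw [show (pp n)^(n+1) = Real.exp (((n:ℝ)+1) * Real.log (pp n)) by
              rw [← Real.rpow_natCast (pp n) (n+1), Real.rpow_def_of_pos D.hpppos]; push_cast; ring_nf,
            show (LA n)^n = Real.exp ((n:ℝ) * Real.log (LA n)) by
              rw [← Real.rpow_natCast (LA n) n, Real.rpow_def_of_pos D.hLApos]; ring_nf]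
          rw [mul_assoc, ← Real.exp_add, ← Real.exp_add, mul_div_assoc, ← Real.exp_sub]
          ring_nf

/-- With `Kₙ = ∫_0^∞ (ln(1+x))ⁿ e^{-x} dx`, one has
`K_{n+1}/Kₙ = ln(n+1) (1 + o(1))` as `n → ∞`, i.e. `(K_{n+1}/Kₙ) / ln(n+1) → 1`. -/
theorem K_ratio_asymptotics
    (K : ℕ → ℝ)
    (hK : ∀ n : ℕ, K n = ∫ x in Set.Ioi (0 : ℝ), (Real.log (1 + x)) ^ n * Real.exp (-x)) :
    Tendsto (fun n : ℕ => (K (n + 1) / K n) / Real.log (n + 1)) atTop (𝓝 1) := by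
  have hKeq : ∀ n : ℕ, K n = Kn n := fun n => hK n
  have hl : Tendsto (fun n:ℕ => (LB n / pp n) * (1 - (LB n)^n / Kn n)) atTop (𝓝 1) := by
    simpa using limC.mul ((tendsto_const_nhds (x := (1:ℝ))).sub limV)
  have hu : Tendsto (fun n:ℕ => 1 + (∫ x in Ioi (n:ℝ), fI (n+1) x) / Kn n) atTop (𝓝 1) := by
    simpa using (tendsto_const_nhds (x := (1:ℝ))).add limU
  apply tendsto_of_tendsto_of_tendsto_of_le_of_le' hl hu
  · filter_upwards [facts_eventually] with n F
    obtain D := derived_of_facts F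
    have hKp : 0 < Kn n := K_pos n
    have hKp1 : 0 < Kn (n+1) := K_pos (n+1)
    have hpp : Real.log ((n:ℝ) + 1) = pp n := by unfold pp; rw [add_comm]
    rw [hKeq (n+1), hKeq n, hpp]
    have hbpos : (0:ℝ) < bb n := by linarith [F.hb1]
    have hls : LB n * (Kn n - (LB n)^n) ≤ Kn (n+1) := lower_split n hbpos
    have heq : (LB n / pp n) * (1 - (LB n)^n / Kn n)
        = (LB n * (Kn n - (LB n)^n) / Kn n) / pp n := by
      field_simp
    rw [heq]
    gcongr
    exact D.hpppos.le
  · filter_upwards [facts_eventually] with n F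
    obtain D := derived_of_facts F
    have hKp : 0 < Kn n := K_pos n
    have hpp : Real.log ((n:ℝ) + 1) = pp n := by unfold pp; rw [add_comm]
    rw [hKeq (n+1), hKeq n, hpp]
    have hT : (0:ℝ) ≤ ∫ x in Ioi (n:ℝ), fI (n+1) x := by
      apply setIntegral_nonneg measurableSet_Ioi
      intro x hx
      exact fI_nonneg (le_trans (n.cast_nonneg) (le_of_lt hx))
    have hus : Kn (n+1) ≤ pp n * Kn n + ∫ x in Ioi (n:ℝ), fI (n+1) x := upper_split n
    set T := ∫ x in Ioi (n:ℝ), fI (n+1) x with hTdef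
    have hpp1 : (1:ℝ) ≤ pp n := by linarith [D.d1a, F.hl2]
    have h1 : Kn (n+1) / Kn n ≤ pp n + T / Kn n := by
      have he : pp n + T / Kn n = (pp n * Kn n + T)/Kn n := by field_simp
      rw [he]
      gcongr
    calc Kn (n+1) / Kn n / pp n ≤ (pp n + T / Kn n) / pp n := by gcongr
      _ = 1 + (T / Kn n) / pp n := by
          field_simp
      _ ≤ 1 + T / Kn n := by
          have := div_le_self (div_nonneg hT hKp.le) hpp1
          linarith
end

section
/- Let W : [0, ∞) → [0, ∞) be the Lambert W function, i.e., W(t) ≥ 0 and W(t) e^{W(t)} = t for all t ≥ 0. Then (W(t+1)/W(t))^t → 1 as t → ∞. -/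
open Real Filter Topology

/-- For the Lambert W function, `(W(t+1)/W(t))ᵗ → 1` as `t → ∞`. -/
theorem lambertW_ratio_pow_tendsto_one
    (W : ℝ → ℝ)
    (hW : ∀ t : ℝ, 0 ≤ t → 0 ≤ W t ∧ W t * Real.exp (W t) = t) :
    Tendsto (fun t : ℝ => (W (t + 1) / W t) ^ t) atTop (𝓝 1) := by
  have hmain : ∀ᶠ t : ℝ in atTop,
      0 ≤ t * Real.log (W (t+1) / W t) ∧
      t * Real.log (W (t+1) / W t) ≤ 2 / Real.log t ∧
      0 < W (t+1) / W t := by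
    filter_upwards [eventually_ge_atTop (Real.exp 2)] with t ht
    have ht0 : (0:ℝ) < t := lt_of_lt_of_le (Real.exp_pos 2) ht
    have ht1 : (0:ℝ) ≤ t + 1 := by linarith
    obtain ⟨hW0, hWe⟩ := hW t ht0.le
    obtain ⟨hW0', hWe'⟩ := hW (t+1) ht1
    have hWtpos : 0 < W t := by
      rcases hW0.lt_or_eq with h | h
      · exact h
      · exfalso; rw [← h] at hWe; simp at hWe; linarith
    have hWtpos' : 0 < W (t+1) := by
      rcases hW0'.lt_or_eq with h | h
      · exact h
      · exfalso; rw [← h] at hWe'; simp at hWe'; linarith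
    have hmono : W t ≤ W (t+1) := by
      by_contra h
      push_neg at h
      have hexp : Real.exp (W (t+1)) < Real.exp (W t) := Real.exp_lt_exp.2 h
      have : W (t+1) * Real.exp (W (t+1)) < W t * Real.exp (W t) := by
        nlinarith [Real.exp_pos (W (t+1))]
      rw [hWe, hWe'] at this; linarith
    have hid : Real.log (W t) + W t = Real.log t := by
      conv_rhs => rw [← hWe]
      rw [Real.log_mul hWtpos.ne' (Real.exp_pos _).ne', Real.log_exp]
    have hid' : Real.log (W (t+1)) + W (t+1) = Real.log (t+1) := by
      conv_rhs => rw [← hWe']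
      rw [Real.log_mul hWtpos'.ne' (Real.exp_pos _).ne', Real.log_exp]
    have hlogmono : Real.log (W t) ≤ Real.log (W (t+1)) :=
      Real.log_le_log hWtpos hmono
    have hdiff : W (t+1) - W t ≤ 1 / t := by
      have h1 : Real.log (t+1) - Real.log t ≤ 1 / t := by
        rw [← Real.log_div (by linarith) ht0.ne']
        have h2 := Real.log_le_sub_one_of_pos (show (0:ℝ) < (t+1)/t by positivity)
        have heq : (t+1)/t - 1 = 1/t := by field_simp; ring
        linarith
      linarith
    have hratio : Real.log (W (t+1) / W t) ≤ (W (t+1) - W t) / W t := by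
      have h2 := Real.log_le_sub_one_of_pos (show 0 < W (t+1) / W t by positivity)
      have heq : W (t+1) / W t - 1 = (W (t+1) - W t) / W t := by field_simp
      linarith
    have hratio0 : 0 ≤ Real.log (W (t+1) / W t) := by
      apply Real.log_nonneg
      rw [le_div_iff₀ hWtpos]; linarith
    have hWbig : 1 ≤ W t := by
      by_contra h
      push_neg at h
      have hexp : Real.exp (W t) < Real.exp 1 := Real.exp_lt_exp.2 h
      have htlt : t < Real.exp 1 := by nlinarith [Real.exp_pos (W t)]
      have : Real.exp 2 < Real.exp 1 := lt_of_le_of_lt ht htlt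
      have := Real.exp_lt_exp.1 this
      linarith
    have hlogt : Real.log t ≤ 2 * W t := by
      have h1 : t ≤ Real.exp (2 * W t) := by
        calc t = W t * Real.exp (W t) := hWe.symm
          _ ≤ Real.exp (W t) * Real.exp (W t) := by
              nlinarith [Real.add_one_le_exp (W t), Real.exp_pos (W t)]
          _ = Real.exp (2 * W t) := by rw [← Real.exp_add]; ring_nf
      calc Real.log t ≤ Real.log (Real.exp (2 * W t)) := Real.log_le_log ht0 h1
        _ = 2 * W t := Real.log_exp _
    have hlogt2 : (2:ℝ) ≤ Real.log t := by
      have h3 := Real.log_le_log (Real.exp_pos 2) ht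
      rwa [Real.log_exp] at h3
    refine ⟨by positivity, ?_, by positivity⟩
    have h2 : t * Real.log (W (t+1) / W t) ≤ 1 / W t := by
      have hstep : Real.log (W (t+1) / W t) ≤ (1/t) / W t := by
        refine hratio.trans ?_
        gcongr
      calc t * Real.log (W (t+1) / W t) ≤ t * ((1/t) / W t) := by
            exact mul_le_mul_of_nonneg_left hstep ht0.le
        _ = 1 / W t := by field_simp
    refine h2.trans ?_
    rw [div_le_div_iff₀ hWtpos (by linarith : (0:ℝ) < Real.log t)]
    linarith
  have h0 : Tendsto (fun t : ℝ => t * Real.log (W (t+1) / W t)) atTop (𝓝 0) := by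
    have hupper : Tendsto (fun t : ℝ => 2 / Real.log t) atTop (𝓝 0) :=
      tendsto_const_nhds.div_atTop Real.tendsto_log_atTop
    refine tendsto_of_tendsto_of_tendsto_of_le_of_le' tendsto_const_nhds hupper ?_ ?_
    · filter_upwards [hmain] with t h using h.1
    · filter_upwards [hmain] with t h using h.2.1
  have hexp : Tendsto (fun t : ℝ => Real.exp (t * Real.log (W (t+1) / W t)))
      atTop (𝓝 1) := by
    have := (Real.continuous_exp.tendsto 0).comp h0
    simpa [Function.comp_def] using this
  refine hexp.congr' ?_
  filter_upwards [hmain] with t h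
  rw [Real.rpow_def_of_pos h.2.2, mul_comm]
end

section
/- Let W : [0, ∞) → [0, ∞) be the Lambert W function, i.e., W(t) ≥ 0 and W(t) e^{W(t)} = t for all t ≥ 0. Then (t+1)/W(t+1) − t/W(t) → 0 as t → ∞; moreover this difference is nonnegative and bounded above by 1/W(t+1) for all t > 0. -/
open Real Filter Topology

lemma xexp_mono {x y : ℝ} (hx : 0 ≤ x) (hxy : x ≤ y) :
    x * Real.exp x ≤ y * Real.exp y :=
  mul_le_mul hxy (Real.exp_le_exp.2 hxy) (Real.exp_pos x).le (hx.trans hxy)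

lemma xexp_lt {a b : ℝ} (ha : 0 ≤ a) (hb : 0 ≤ b)
    (h : a * Real.exp a < b * Real.exp b) : a < b := by
  by_contra hle
  exact absurd (xexp_mono hb (not_lt.1 hle)) (not_le.2 h)

/-- For the Lambert W function, `(t+1)/W(t+1) - t/W(t) → 0` as `t → ∞`; moreover this
difference is nonnegative and bounded above by `1/W(t+1)` for all `t > 0`. -/
theorem lambertW_quotient_difference
    (W : ℝ → ℝ)
    (hW : ∀ t : ℝ, 0 ≤ t → 0 ≤ W t ∧ W t * Real.exp (W t) = t) :
    (∀ t : ℝ, 0 < t →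
      0 ≤ (t + 1) / W (t + 1) - t / W t ∧
      (t + 1) / W (t + 1) - t / W t ≤ 1 / W (t + 1)) ∧
    Tendsto (fun t : ℝ => (t + 1) / W (t + 1) - t / W t) atTop (𝓝 0) := by
  have hpos : ∀ t : ℝ, 0 < t → 0 < W t := by
    intro t ht
    have h := hW t ht.le
    rcases h.1.lt_or_eq with h1 | h1
    · exact h1
    · exfalso
      have h2 := h.2
      rw [← h1] at h2
      simp at h2
      linarith
  have hmono : ∀ t : ℝ, 0 < t → W t ≤ W (t + 1) := by
    intro t ht
    have h1 := hW t ht.le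
    have h2 := hW (t + 1) (by linarith)
    have : W t * Real.exp (W t) < W (t + 1) * Real.exp (W (t + 1)) := by
      rw [h1.2, h2.2]; linarith
    exact (xexp_lt h1.1 h2.1 this).le
  have hquot : ∀ t : ℝ, 0 < t → t / W t = Real.exp (W t) := by
    intro t ht
    have h := hW t ht.le
    rw [div_eq_iff (hpos t ht).ne']
    linarith [h.2]
  have hbounds : ∀ t : ℝ, 0 < t →
      0 ≤ (t + 1) / W (t + 1) - t / W t ∧
      (t + 1) / W (t + 1) - t / W t ≤ 1 / W (t + 1) := by
    intro t ht
    have ht1 : (0:ℝ) < t + 1 := by linarith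
    have h1 := hW t ht.le
    have h2 := hW (t + 1) ht1.le
    have hab := hmono t ht
    have hb : 0 < W (t + 1) := hpos (t + 1) ht1
    rw [hquot t ht, hquot (t + 1) ht1]
    have hee := Real.exp_le_exp.2 hab
    constructor
    · linarith
    · rw [sub_le_iff_le_add]
      have key : (Real.exp (W (t + 1)) - Real.exp (W t)) * W (t + 1) ≤ 1 := by
        have h3 : W t * Real.exp (W t) ≤ W (t + 1) * Real.exp (W t) :=
          mul_le_mul_of_nonneg_right hab (Real.exp_pos _).le
        nlinarith [h1.2, h2.2]
      have := (le_div_iff₀ hb).2 key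
      linarith
  refine ⟨hbounds, ?_⟩
  have hWtop : Tendsto (fun t : ℝ => W (t + 1)) atTop atTop := by
    rw [tendsto_atTop]
    intro M
    filter_upwards [eventually_gt_atTop (max 0 (max M 0 * Real.exp (max M 0)))] with t ht
    have ht0 : (0:ℝ) < t := lt_of_le_of_lt (le_max_left _ _) ht
    have h2 := hW (t + 1) (by linarith)
    by_contra hcon
    push_neg at hcon
    have hWle : W (t + 1) ≤ max M 0 := le_trans hcon.le (le_max_left _ _)
    have := xexp_mono h2.1 hWle
    rw [h2.2] at this
    have := lt_of_le_of_lt (le_max_right 0 _) ht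
    linarith [xexp_mono h2.1 hWle]
  have hinv : Tendsto (fun t : ℝ => 1 / W (t + 1)) atTop (𝓝 0) := by
    simp only [one_div]; exact hWtop.inv_tendsto_atTop
  refine tendsto_of_tendsto_of_tendsto_of_le_of_le' tendsto_const_nhds hinv ?_ ?_
  · filter_upwards [eventually_gt_atTop (0:ℝ)] with t ht
    exact (hbounds t ht).1
  · filter_upwards [eventually_gt_atTop (0:ℝ)] with t ht
    exact (hbounds t ht).2
end

section
/- For r ∈ [0, 1] and n ∈ ℕ define K_n(r) := ∫_0^∞ (ln(1+x))^{n r} e^{-x} dx, and for r₁, r₂ ∈ [0, 1] define m_n := (n!)^2 K_n(r₁) K_n(r₂). Then for every choice of r₁, r₂ ∈ [0, 1], the sequence (m_n) satisfies Carleman's condition ∑_{n=1}^∞ m_n^{-1/(2n)} = ∞; and if in addition max(r₁, r₂) > 0, then (m_n) does not satisfy the quadratic rate of growth condition, i.e., there is no constant C > 0 such that m_{n+1} ≤ C (n+1)^2 m_n for all n ≥ 1. -/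
open MeasureTheory Filter Topology Real

open Set


lemma meas_aux (a : ℝ) :
    Measurable (fun x : ℝ => Real.log (1 + x) ^ a * Real.exp (-x)) := by
  exact ((measurable_const.add measurable_id).log.pow_const a).mul (measurable_id.neg.exp)

lemma intg_pow_exp {a : ℝ} (ha : 0 ≤ a) :
    IntegrableOn (fun x : ℝ => x ^ a * Real.exp (-x)) (Ioi 0) := by
  have hΓ : IntegrableOn (fun x : ℝ => Real.exp (-x) * x ^ ((a + 1) - 1)) (Ioi 0) :=
    Real.GammaIntegral_convergent (by linarith)
  refine hΓ.congr_fun (fun x _ => ?_) measurableSet_Ioi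
  simp [mul_comm]

lemma intg_aux {a : ℝ} (ha : 0 ≤ a) :
    IntegrableOn (fun x : ℝ => Real.log (1 + x) ^ a * Real.exp (-x)) (Ioi 0) := by
  refine Integrable.mono (intg_pow_exp ha) ((meas_aux a).aestronglyMeasurable) ?_
  filter_upwards [ae_restrict_mem measurableSet_Ioi] with x hx
  have hx0 : (0:ℝ) < x := hx
  have hl0 : 0 ≤ Real.log (1 + x) := Real.log_nonneg (by linarith)
  have hlx : Real.log (1 + x) ≤ x := by
    have := Real.log_le_sub_one_of_pos (show (0:ℝ) < 1 + x by linarith)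
    linarith
  rw [Real.norm_eq_abs, Real.norm_eq_abs, abs_of_nonneg (by positivity),
    abs_of_nonneg (by positivity)]
  exact mul_le_mul_of_nonneg_right (Real.rpow_le_rpow hl0 hlx ha) (Real.exp_pos _).le

lemma nonneg_aux {a : ℝ} {x : ℝ} (hx : x ∈ Ioi (0:ℝ)) :
    0 ≤ Real.log (1 + x) ^ a * Real.exp (-x) := by
  have hx0 : (0:ℝ) < x := hx
  have hl0 : 0 ≤ Real.log (1 + x) := Real.log_nonneg (by linarith)
  positivity

lemma lower_aux {a T : ℝ} (ha : 0 ≤ a) (hT : 1 ≤ T) :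
    T ^ a * Real.exp (1 - Real.exp T)
      ≤ ∫ x in Ioi (0:ℝ), Real.log (1 + x) ^ a * Real.exp (-x) := by
  set c : ℝ := Real.exp T - 1 with hc
  have hc0 : 0 < c := by
    have : (1:ℝ) < Real.exp T := by
      calc (1:ℝ) < Real.exp 1 := by simpa using Real.exp_lt_exp.2 (show (0:ℝ) < 1 by norm_num)
      _ ≤ Real.exp T := Real.exp_le_exp.2 hT
    simp [hc]; linarith
  have h1 : ∫ x in Ioi c, T ^ a * Real.exp (-x)
      ≤ ∫ x in Ioi c, Real.log (1 + x) ^ a * Real.exp (-x) := by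
    have he : IntegrableOn (fun x : ℝ => Real.exp (-x)) (Ioi c) :=
      (exp_neg_integrableOn_Ioi c one_pos).congr_fun (fun x _ => by norm_num) measurableSet_Ioi
    refine setIntegral_mono_on (he.const_mul _)
      ((intg_aux ha).mono_set (Ioi_subset_Ioi hc0.le)) measurableSet_Ioi ?_
    · intro x hx
      have hx' : c < x := hx
      have hTl : T ≤ Real.log (1 + x) := by
        rw [← Real.log_exp T]
        apply Real.log_le_log (Real.exp_pos T)
        simp [hc] at hx' ⊢; linarith
      exact mul_le_mul_of_nonneg_right
        (Real.rpow_le_rpow (by linarith : (0:ℝ) ≤ T) hTl ha) (Real.exp_pos _).le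
  have h2 : ∫ x in Ioi c, Real.log (1 + x) ^ a * Real.exp (-x)
      ≤ ∫ x in Ioi (0:ℝ), Real.log (1 + x) ^ a * Real.exp (-x) := by
    refine setIntegral_mono_set (intg_aux ha) ?_ (HasSubset.Subset.eventuallyLE (Ioi_subset_Ioi hc0.le))
    filter_upwards [ae_restrict_mem measurableSet_Ioi] with x hx using nonneg_aux hx
  have h3 : ∫ x in Ioi c, T ^ a * Real.exp (-x) = T ^ a * Real.exp (1 - Real.exp T) := by
    rw [integral_const_mul, integral_exp_neg_Ioi]
    simp [hc]
  linarith

lemma exp_int : IntegrableOn (fun x : ℝ => Real.exp (-x)) (Ioi (0:ℝ)) :=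
  (exp_neg_integrableOn_Ioi 0 one_pos).congr_fun (fun x _ => by norm_num) measurableSet_Ioi

lemma gamma_int (n : ℕ) :
    ∫ x in Ioi (0:ℝ), x ^ (n:ℝ) * Real.exp (-x) = n.factorial := by
  have h := Real.Gamma_eq_integral (show (0:ℝ) < n + 1 by positivity)
  rw [Real.Gamma_nat_eq_factorial] at h
  rw [h]
  refine setIntegral_congr_fun measurableSet_Ioi (fun x _ => ?_)
  norm_num [mul_comm]

lemma upper_aux {n : ℕ} (hn : 1 ≤ n) {r : ℝ} (hr0 : 0 ≤ r) (hr1 : r ≤ 1) :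
    ∫ x in Ioi (0:ℝ), Real.log (1 + x) ^ ((n:ℝ) * r) * Real.exp (-x)
      ≤ (4 * Real.log (1 + 25 * (n:ℝ) ^ 2)) ^ n := by
  have hn1 : (1:ℝ) ≤ n := by exact_mod_cast hn
  set c : ℝ := 25 * (n:ℝ) ^ 2 with hcdef
  have hc25 : (25:ℝ) ≤ c := by nlinarith
  set L : ℝ := Real.log (1 + c) with hLdef
  have hL1 : (1:ℝ) ≤ L := by
    rw [hLdef, Real.le_log_iff_exp_le (by linarith)]
    have := Real.exp_one_lt_d9
    linarith
  have hnr0 : 0 ≤ (n:ℝ) * r := by positivity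
  -- Step 1 : pointwise t^(nr) ≤ 1 + t^n
  have step1 : ∫ x in Ioi (0:ℝ), Real.log (1 + x) ^ ((n:ℝ) * r) * Real.exp (-x)
      ≤ 1 + ∫ x in Ioi (0:ℝ), Real.log (1 + x) ^ ((n:ℝ)) * Real.exp (-x) := by
    have hint : IntegrableOn
        (fun x : ℝ => Real.exp (-x) + Real.log (1 + x) ^ ((n:ℝ)) * Real.exp (-x)) (Ioi 0) :=
      exp_int.add (intg_aux (by positivity))
    have hmono : ∫ x in Ioi (0:ℝ), Real.log (1 + x) ^ ((n:ℝ) * r) * Real.exp (-x)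
        ≤ ∫ x in Ioi (0:ℝ), (Real.exp (-x) + Real.log (1 + x) ^ ((n:ℝ)) * Real.exp (-x)) := by
      refine setIntegral_mono_on (intg_aux hnr0) hint measurableSet_Ioi (fun x hx => ?_)
      have hx0 : (0:ℝ) < x := hx
      have ht0 : 0 ≤ Real.log (1 + x) := Real.log_nonneg (by linarith)
      have key : Real.log (1 + x) ^ ((n:ℝ) * r) ≤ 1 + Real.log (1 + x) ^ ((n:ℝ)) := by
        rcases le_total (Real.log (1 + x)) 1 with h1 | h1
        · have := Real.rpow_le_one ht0 h1 hnr0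
          have h2 : 0 ≤ Real.log (1 + x) ^ ((n:ℝ)) := Real.rpow_nonneg ht0 _
          linarith
        · have := Real.rpow_le_rpow_of_exponent_le h1
            (show (n:ℝ) * r ≤ (n:ℝ) by nlinarith)
          linarith
      have := mul_le_mul_of_nonneg_right key (Real.exp_pos x |>.le)
      calc Real.log (1 + x) ^ ((n:ℝ) * r) * Real.exp (-x)
          ≤ (1 + Real.log (1 + x) ^ ((n:ℝ))) * Real.exp (-x) :=
            mul_le_mul_of_nonneg_right key (Real.exp_pos (-x)).le
        _ = Real.exp (-x) + Real.log (1 + x) ^ ((n:ℝ)) * Real.exp (-x) := by ring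
    rw [integral_add exp_int (intg_aux (by positivity)), integral_exp_neg_Ioi_zero] at hmono
    exact hmono
  -- Step 2 : bound B := ∫ log(1+x)^n e^{-x}
  have step2 : ∫ x in Ioi (0:ℝ), Real.log (1 + x) ^ ((n:ℝ)) * Real.exp (-x)
      ≤ (2 * L) ^ n + (2 / (1 + c)) ^ n * (n.factorial : ℝ) := by
    have hc0 : (0:ℝ) < 1 + c := by linarith
    have hint2 : IntegrableOn (fun x : ℝ =>
        (2 * L) ^ n * Real.exp (-x) + (2 / (1 + c)) ^ n * (x ^ ((n:ℝ)) * Real.exp (-x)))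
        (Ioi 0) := (exp_int.const_mul _).add ((intg_pow_exp (by positivity)).const_mul _)
    have hmono : ∫ x in Ioi (0:ℝ), Real.log (1 + x) ^ ((n:ℝ)) * Real.exp (-x)
        ≤ ∫ x in Ioi (0:ℝ), ((2 * L) ^ n * Real.exp (-x)
            + (2 / (1 + c)) ^ n * (x ^ ((n:ℝ)) * Real.exp (-x))) := by
      refine setIntegral_mono_on (intg_aux (by positivity)) hint2 measurableSet_Ioi
        (fun x hx => ?_)
      have hx0 : (0:ℝ) < x := hx
      have ht0 : 0 ≤ Real.log (1 + x) := Real.log_nonneg (by linarith)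
      have htan : Real.log (1 + x) ≤ L + x / (1 + c) := by
        have hpos : (0:ℝ) < (1 + x) / (1 + c) := by positivity
        have h := Real.log_le_sub_one_of_pos hpos
        rw [Real.log_div (by linarith) (by linarith)] at h
        have h2 : (1 + x) / (1 + c) ≤ 1 + x / (1 + c) := by
          rw [add_div]
          have : (1:ℝ) / (1 + c) ≤ 1 := by
            rw [div_le_one hc0]; linarith
          linarith
        rw [hLdef]; linarith
      have key : Real.log (1 + x) ^ ((n:ℝ))
          ≤ (2 * L) ^ n + (2 / (1 + c)) ^ n * x ^ ((n:ℝ)) := by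
        have h1 : Real.log (1 + x) ^ ((n:ℝ)) ≤ (L + x / (1 + c)) ^ ((n:ℝ)) :=
          Real.rpow_le_rpow ht0 htan (by positivity)
        have hb0 : (0:ℝ) ≤ x / (1 + c) := by positivity
        have h2 : (L + x / (1 + c)) ^ ((n:ℝ))
            ≤ (2 * L) ^ n + (2 / (1 + c)) ^ n * x ^ ((n:ℝ)) := by
          have hx2 : (2 / (1 + c)) ^ n * x ^ ((n:ℝ)) = (2 * (x / (1 + c))) ^ ((n:ℝ)) := by
            rw [show (2:ℝ) * (x / (1 + c)) = (2 / (1 + c)) * x by ring,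
              Real.mul_rpow (by positivity) hx0.le, Real.rpow_natCast (2 / (1 + c)) n]
          have h2L : ((2 * L) ^ n : ℝ) = (2 * L) ^ ((n:ℝ)) := (Real.rpow_natCast _ n).symm
          rcases le_total L (x / (1 + c)) with hLe | hLe
          · have : (L + x / (1 + c)) ^ ((n:ℝ)) ≤ (2 * (x / (1 + c))) ^ ((n:ℝ)) :=
              Real.rpow_le_rpow (by linarith) (by linarith) (by positivity)
            have hnn : (0:ℝ) ≤ (2 * L) ^ n := by positivity
            rw [hx2]; linarith
          · have : (L + x / (1 + c)) ^ ((n:ℝ)) ≤ (2 * L) ^ ((n:ℝ)) :=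
              Real.rpow_le_rpow (by linarith) (by linarith) (by positivity)
            have hnn : (0:ℝ) ≤ (2 / (1 + c)) ^ n * x ^ ((n:ℝ)) := by
              have := Real.rpow_nonneg hx0.le ((n:ℝ)); positivity
            rw [← h2L] at this; linarith
        linarith
      calc Real.log (1 + x) ^ ((n:ℝ)) * Real.exp (-x)
          ≤ ((2 * L) ^ n + (2 / (1 + c)) ^ n * x ^ ((n:ℝ))) * Real.exp (-x) :=
            mul_le_mul_of_nonneg_right key (Real.exp_pos (-x)).le
        _ = (2 * L) ^ n * Real.exp (-x) + (2 / (1 + c)) ^ n * (x ^ ((n:ℝ)) * Real.exp (-x)) := by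
            ring
    rw [integral_add (exp_int.const_mul _) ((intg_pow_exp (by positivity)).const_mul _),
      integral_const_mul, integral_const_mul, integral_exp_neg_Ioi_zero, gamma_int] at hmono
    simpa using hmono
  -- Step 3 : the factorial tail term is ≤ 1
  have step3 : (2 / (1 + c)) ^ n * (n.factorial : ℝ) ≤ 1 := by
    have hfact : (n.factorial : ℝ) ≤ (n:ℝ) ^ n := by
      exact_mod_cast Nat.factorial_le_pow n
    have hc0 : (0:ℝ) < 1 + c := by linarith
    have h1 : (2 / (1 + c)) ^ n * (n.factorial : ℝ) ≤ (2 / (1 + c)) ^ n * (n:ℝ) ^ n :=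
      mul_le_mul_of_nonneg_left hfact (by positivity)
    have h2 : (2 / (1 + c)) ^ n * (n:ℝ) ^ n = (2 * n / (1 + c)) ^ n := by
      rw [← mul_pow]; ring_nf
    have h3 : (2 * (n:ℝ) / (1 + c)) ≤ 1 := by
      rw [div_le_one hc0]; nlinarith
    have h4 : (2 * (n:ℝ) / (1 + c)) ^ n ≤ 1 :=
      pow_le_one₀ (by positivity) h3
    calc (2 / (1 + c)) ^ n * (n.factorial : ℝ) ≤ (2 / (1 + c)) ^ n * (n:ℝ) ^ n := h1
      _ = (2 * n / (1 + c)) ^ n := h2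
      _ ≤ 1 := h4
  -- Step 4 : combine
  have h2L2 : (2:ℝ) ≤ (2 * L) ^ n := by
    calc (2:ℝ) ≤ 2 * L := by linarith
      _ ≤ (2 * L) ^ n := le_self_pow₀ (by linarith) (by omega)
  have hfin : (2:ℝ) + (2 * L) ^ n ≤ (4 * L) ^ n := by
    have : ((4:ℝ) * L) ^ n = 2 ^ n * (2 * L) ^ n := by
      rw [← mul_pow]; ring_nf
    have h2n : (2:ℝ) ≤ 2 ^ n := le_self_pow₀ one_le_two (by omega)
    have hp : (0:ℝ) ≤ (2 * L) ^ n := by positivity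
    nlinarith
  linarith

lemma div_aux : ¬ Summable (fun n : ℕ => 1 / ((n:ℝ) * (1 + Real.log n))) := by
  set g : ℕ → ℝ := fun n => 1 / ((n:ℝ) * (1 + Real.log n)) with hg
  have hpos : ∀ n : ℕ, 1 ≤ n → 0 < (n:ℝ) * (1 + Real.log n) := by
    intro n hn
    have h1 : (1:ℝ) ≤ n := by exact_mod_cast hn
    have : 0 ≤ Real.log n := Real.log_nonneg h1
    nlinarith
  have h_nonneg : ∀ n, 0 ≤ g n := by
    intro n
    rcases Nat.eq_zero_or_pos n with h | h
    · simp [hg, h]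
    · exact le_of_lt (one_div_pos.2 (hpos n h))
  have h_mono : ∀ ⦃a b : ℕ⦄, 0 < a → a ≤ b → g b ≤ g a := by
    intro a b ha hab
    have ha1 : (1:ℝ) ≤ a := by exact_mod_cast ha
    have hab' : (a:ℝ) ≤ b := by exact_mod_cast hab
    have hla : 0 ≤ Real.log a := Real.log_nonneg ha1
    have hlog : Real.log a ≤ Real.log b := Real.log_le_log (by linarith) hab'
    apply one_div_le_one_div_of_le (hpos a ha)
    nlinarith
  intro hs
  have hcond : Summable (fun k : ℕ => (2:ℝ) ^ k * g (2 ^ k)) :=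
    (summable_condensed_iff_of_nonneg h_nonneg h_mono).2 hs
  have hck : ∀ k : ℕ, 1 / ((k:ℝ) + 1) ≤ (2:ℝ) ^ k * g (2 ^ k) := by
    intro k
    have h2k : (((2:ℕ) ^ k : ℕ) : ℝ) = (2:ℝ) ^ k := by push_cast; ring
    have hlog2k : Real.log (((2:ℕ) ^ k : ℕ) : ℝ) = k * Real.log 2 := by
      rw [h2k, Real.log_pow]
    have hpow : (0:ℝ) < (2:ℝ) ^ k := by positivity
    have hck' : (2:ℝ) ^ k * g (2 ^ k) = 1 / (1 + k * Real.log 2) := by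
      rw [hg]
      simp only [h2k, hlog2k]
      rw [Real.log_pow]
      field_simp
    rw [hck']
    have hl2 : Real.log 2 ≤ 1 := by
      have := Real.log_le_sub_one_of_pos (show (0:ℝ) < 2 by norm_num); linarith
    have hl2' : 0 < Real.log 2 := Real.log_pos (by norm_num)
    apply one_div_le_one_div_of_le (by positivity)
    have : (k:ℝ) * Real.log 2 ≤ k := by
      have : (0:ℝ) ≤ k := Nat.cast_nonneg k
      nlinarith
    linarith
  have hsum1 : Summable (fun k : ℕ => 1 / ((k:ℝ) + 1)) :=
    Summable.of_nonneg_of_le (fun k => by positivity) hck hcond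
  have : Summable (fun k : ℕ => 1 / ((k:ℝ))) := by
    rw [← summable_nat_add_iff 1]
    refine hsum1.congr (fun k => ?_)
    push_cast; ring
  exact Real.not_summable_one_div_natCast this

lemma carleman_sum_div {f : ℕ → ℝ} (h0 : ∀ n : ℕ, 1 ≤ n → 0 ≤ f n)
    (hl : ∀ n : ℕ, 1 ≤ n → 1 / (108 * (n:ℝ) * (1 + Real.log n)) ≤ f n) :
    Tendsto (fun N : ℕ => ∑ n ∈ Finset.Icc 1 N, f n) atTop atTop := by
  set F : ℕ → ℝ := fun i => f (1 + i) with hF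
  have hF0 : ∀ i, 0 ≤ F i := fun i => h0 (1 + i) (by omega)
  have hFnotsum : ¬ Summable F := by
    intro hs
    have hsum2 : Summable (fun i : ℕ => (1/108) * (1 / (((1 + i : ℕ):ℝ) * (1 + Real.log ((1 + i : ℕ):ℝ))))) := by
      refine Summable.of_nonneg_of_le (fun i => ?_) (fun i => ?_) hs
      · have h1 : (1:ℝ) ≤ ((1 + i : ℕ):ℝ) := by exact_mod_cast Nat.one_le_iff_ne_zero.2 (by omega)
        have := Real.log_nonneg h1
        positivity
      · have := hl (1 + i) (by omega)
        calc (1/108 : ℝ) * (1 / (((1 + i : ℕ):ℝ) * (1 + Real.log ((1 + i : ℕ):ℝ))))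
            = 1 / (108 * ((1 + i : ℕ):ℝ) * (1 + Real.log ((1 + i : ℕ):ℝ))) := by
              rw [div_mul_div_comm, one_mul, mul_assoc]
          _ ≤ F i := this
    have hsum3 : Summable (fun i : ℕ => 1 / (((1 + i : ℕ):ℝ) * (1 + Real.log ((1 + i : ℕ):ℝ)))) := by
      have := hsum2.mul_left 108
      refine this.congr (fun i => ?_)
      have h1 : (0:ℝ) < ((1 + i : ℕ):ℝ) := by positivity
      have h2 : (0:ℝ) ≤ Real.log ((1 + i : ℕ):ℝ) :=
        Real.log_nonneg (by exact_mod_cast Nat.one_le_iff_ne_zero.2 (by omega))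
      push_cast at h1 h2 ⊢
      have hA : (0:ℝ) < (1+(i:ℝ)) * (1 + Real.log (1+(i:ℝ))) := by nlinarith
      ring
    have hsum4 : Summable (fun n : ℕ => 1 / ((n:ℝ) * (1 + Real.log n))) := by
      rw [← summable_nat_add_iff 1]
      refine hsum3.congr (fun i => ?_)
      rw [add_comm 1 i]
    exact div_aux hsum4
  have htend : Tendsto (fun N : ℕ => ∑ i ∈ Finset.range N, F i) atTop atTop :=
    (not_summable_iff_tendsto_nat_atTop_of_nonneg hF0).1 hFnotsum
  refine htend.congr (fun N => ?_)
  rw [← Finset.Ico_add_one_right_eq_Icc, Finset.sum_Ico_eq_sum_range]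
  simp [hF]

lemma part1_aux
    (r₁ r₂ : ℝ) (hr₁0 : 0 ≤ r₁) (hr₁1 : r₁ ≤ 1) (hr₂0 : 0 ≤ r₂) (hr₂1 : r₂ ≤ 1)
    (K : ℕ → ℝ → ℝ)
    (c₀ : ℝ) (hc₀ : 0 < c₀)
    (hKlow : ∀ (n : ℕ) (r : ℝ), 0 ≤ r → r ≤ 1 → c₀ ≤ K n r)
    (hKup : ∀ (n : ℕ), 1 ≤ n → ∀ (r : ℝ), 0 ≤ r → r ≤ 1 →
      K n r ≤ (4 * Real.log (1 + 25 * (n:ℝ) ^ 2)) ^ n)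
    (m : ℕ → ℝ)
    (hm : ∀ n : ℕ, m n = (n.factorial : ℝ) ^ 2 * K n r₁ * K n r₂) :
    Tendsto (fun N : ℕ => ∑ n ∈ Finset.Icc 1 N, m n ^ (-(1 : ℝ) / (2 * n)))
      atTop atTop := by
  apply carleman_sum_div
  · intro n hn
    have h1 : c₀ ≤ K n r₁ := hKlow n r₁ hr₁0 hr₁1
    have h2 : c₀ ≤ K n r₂ := hKlow n r₂ hr₂0 hr₂1
    have hmn : 0 ≤ m n := by
      rw [hm n]
      have hK1 : 0 < K n r₁ := hc₀.trans_le h1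
      have hK2 : 0 < K n r₂ := hc₀.trans_le h2
      positivity
    exact Real.rpow_nonneg hmn _
  · intro n hn
    have hn1 : (1:ℝ) ≤ n := by exact_mod_cast hn
    set L : ℝ := Real.log (1 + 25 * (n:ℝ) ^ 2) with hLdef
    have hL1 : (1:ℝ) ≤ L := by
      rw [hLdef, Real.le_log_iff_exp_le (by nlinarith)]
      have := Real.exp_one_lt_d9
      nlinarith
    set S : ℝ := 4 * L with hSdef
    have hS0 : 0 < S := by rw [hSdef]; linarith
    have h1 : c₀ ≤ K n r₁ := hKlow n r₁ hr₁0 hr₁1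
    have h2 : c₀ ≤ K n r₂ := hKlow n r₂ hr₂0 hr₂1
    have hu1 : K n r₁ ≤ S ^ n := hKup n hn r₁ hr₁0 hr₁1
    have hu2 : K n r₂ ≤ S ^ n := hKup n hn r₂ hr₂0 hr₂1
    have hK1pos : 0 < K n r₁ := hc₀.trans_le h1
    have hK2pos : 0 < K n r₂ := hc₀.trans_le h2
    have hmpos : 0 < m n := by
      rw [hm n]
      positivity
    have hmup : m n ≤ ((n:ℝ) * S) ^ (2 * n) := by
      rw [hm n]
      have hfact : (n.factorial : ℝ) ≤ (n:ℝ) ^ n := by exact_mod_cast Nat.factorial_le_pow n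
      have hSn : (0:ℝ) < S ^ n := by positivity
      have hfp : (0:ℝ) ≤ (n.factorial : ℝ) ^ 2 := by positivity
      have hf2 : (n.factorial : ℝ) ^ 2 ≤ ((n:ℝ) ^ n) ^ 2 := by
        have h0 : (0:ℝ) ≤ (n.factorial : ℝ) := by positivity
        nlinarith
      calc (n.factorial : ℝ) ^ 2 * K n r₁ * K n r₂
          ≤ (n.factorial : ℝ) ^ 2 * S ^ n * S ^ n := by
            apply mul_le_mul (mul_le_mul le_rfl hu1 hK1pos.le hfp) hu2 hK2pos.le (by positivity)
        _ ≤ ((n:ℝ) ^ n) ^ 2 * S ^ n * S ^ n := by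
            apply mul_le_mul_of_nonneg_right (mul_le_mul_of_nonneg_right hf2 hSn.le) hSn.le
        _ = ((n:ℝ) * S) ^ (2 * n) := by
            rw [show 2 * n = n * 2 by ring, pow_mul ((n:ℝ) * S) n 2, mul_pow (n:ℝ) S n]
            ring
    have hbase : (0:ℝ) < (n:ℝ) * S := by positivity
    have hrpow : (((n:ℝ) * S) ^ (2 * n)) ^ (-(1:ℝ) / (2 * (n:ℝ)))
        = ((n:ℝ) * S)⁻¹ := by
      rw [← Real.rpow_natCast ((n:ℝ) * S) (2 * n), ← Real.rpow_mul hbase.le]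
      have hne : (n:ℝ) ≠ 0 := by positivity
      have hee : ((2 * n : ℕ) : ℝ) * (-(1:ℝ) / (2 * (n:ℝ))) = -1 := by
        push_cast
        field_simp
      rw [hee, Real.rpow_neg_one]
    have hmain : ((n:ℝ) * S)⁻¹ ≤ m n ^ (-(1:ℝ) / (2 * (n:ℝ))) := by
      rw [← hrpow]
      apply Real.rpow_le_rpow_of_nonpos hmpos hmup
      apply div_nonpos_of_nonpos_of_nonneg
      · norm_num
      · positivity
    have hfinal : 1 / (108 * (n:ℝ) * (1 + Real.log n)) ≤ ((n:ℝ) * S)⁻¹ := by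
      have hlogn : 0 ≤ Real.log n := Real.log_nonneg hn1
      rw [one_div, inv_le_inv₀]
      · have hSb : S ≤ 108 * (1 + Real.log n) := by
          have hlog26 : Real.log 26 ≤ 25 := by
            have := Real.log_le_sub_one_of_pos (show (0:ℝ) < 26 by norm_num); linarith
          have hLup : L ≤ 25 + 2 * Real.log n := by
            rw [hLdef]
            have h26 : (1:ℝ) + 25 * (n:ℝ) ^ 2 ≤ 26 * (n:ℝ) ^ 2 := by nlinarith
            have hlogmono : Real.log (1 + 25 * (n:ℝ) ^ 2) ≤ Real.log (26 * (n:ℝ) ^ 2) :=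
              Real.log_le_log (by nlinarith) h26
            have heq : Real.log (26 * (n:ℝ) ^ 2) = Real.log 26 + 2 * Real.log n := by
              rw [Real.log_mul (by norm_num) (by positivity), Real.log_pow]
              push_cast; ring
            linarith
          rw [hSdef]; linarith
        nlinarith
      · nlinarith
      · exact hbase
    exact le_trans hfinal hmain

lemma part2_aux
    (r₁ r₂ : ℝ) (hr₁0 : 0 ≤ r₁) (hr₁1 : r₁ ≤ 1) (hr₂0 : 0 ≤ r₂) (hr₂1 : r₂ ≤ 1)
    (K : ℕ → ℝ → ℝ)
    (c₀ : ℝ) (hc₀ : 0 < c₀)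
    (hKlowT : ∀ (n : ℕ) (r : ℝ), 0 ≤ r → r ≤ 1 → ∀ T : ℝ, 1 ≤ T →
      T ^ ((n:ℝ) * r) * Real.exp (1 - Real.exp T) ≤ K n r)
    (hKlow : ∀ (n : ℕ) (r : ℝ), 0 ≤ r → r ≤ 1 → c₀ ≤ K n r)
    (m : ℕ → ℝ)
    (hm : ∀ n : ℕ, m n = (n.factorial : ℝ) ^ 2 * K n r₁ * K n r₂) :
    (0 < max r₁ r₂ →
      ¬ ∃ C : ℝ, 0 < C ∧ ∀ n : ℕ, 1 ≤ n → m (n + 1) ≤ C * (n + 1) ^ 2 * m n) := by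
  intro hrmax
  rintro ⟨C, hC, hCle⟩
  set r : ℝ := max r₁ r₂ with hrdef
  have hr0 : 0 < r := hrmax
  have hr1 : r ≤ 1 := max_le hr₁1 hr₂1
  have hP : ∀ n : ℕ, 1 ≤ n →
      K (n+1) r₁ * K (n+1) r₂ ≤ C * (K n r₁ * K n r₂) := by
    intro n hn
    have h := hCle n hn
    rw [hm (n+1), hm n] at h
    have hfs : ((n+1).factorial : ℝ) = ((n:ℝ) + 1) * (n.factorial : ℝ) := by
      push_cast [Nat.factorial_succ]; ring
    rw [hfs] at h
    have hpos : (0:ℝ) < ((n:ℝ) + 1) ^ 2 * (n.factorial : ℝ) ^ 2 := by positivity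
    have h' : (((n:ℝ) + 1) ^ 2 * (n.factorial : ℝ) ^ 2) * (K (n+1) r₁ * K (n+1) r₂)
        ≤ (((n:ℝ) + 1) ^ 2 * (n.factorial : ℝ) ^ 2) * (C * (K n r₁ * K n r₂)) := by
      push_cast at h ⊢
      nlinarith [h]
    exact le_of_mul_le_mul_left h' hpos
  have hPn : ∀ k : ℕ, K (k+1) r₁ * K (k+1) r₂ ≤ C ^ k * (K 1 r₁ * K 1 r₂) := by
    intro k
    induction k with
    | zero => simp
    | succ k ih =>
      calc K (k+2) r₁ * K (k+2) r₂ ≤ C * (K (k+1) r₁ * K (k+1) r₂) := hP (k+1) (by omega)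
        _ ≤ C * (C ^ k * (K 1 r₁ * K 1 r₂)) := by
            have := mul_le_mul_of_nonneg_left ih hC.le
            linarith
        _ = C ^ (k+1) * (K 1 r₁ * K 1 r₂) := by rw [pow_succ]; ring
  set T : ℝ := max 1 ((2 * C) ^ (1 / r)) with hTdef
  have hT1 : (1:ℝ) ≤ T := le_max_left _ _
  have hTr : 2 * C ≤ T ^ r := by
    rcases le_total (2 * C) 1 with h | h
    · have : T ^ (0:ℝ) ≤ T ^ r := Real.rpow_le_rpow_of_exponent_le hT1 hr0.le
      rw [Real.rpow_zero] at this
      linarith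
    · have hx0 : (0:ℝ) ≤ (2 * C) ^ (1 / r) := Real.rpow_nonneg (by linarith) _
      have hxT : (2 * C) ^ (1 / r) ≤ T := le_max_right _ _
      have : ((2 * C) ^ (1 / r)) ^ r ≤ T ^ r := Real.rpow_le_rpow hx0 hxT hr0.le
      rw [← Real.rpow_mul (by linarith : (0:ℝ) ≤ 2 * C), one_div,
        inv_mul_cancel₀ hr0.ne', Real.rpow_one] at this
      exact this
  set D : ℝ := Real.exp (1 - Real.exp T) with hDdef
  have hD : 0 < D := Real.exp_pos _
  have hprod : ∀ n : ℕ, c₀ * D * (T ^ r) ^ n ≤ K n r₁ * K n r₂ := by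
    intro n
    have hT0 : (0:ℝ) ≤ T := by linarith
    have hTrn : (T ^ r) ^ n = T ^ ((n:ℝ) * r) := by
      rw [← Real.rpow_natCast (T ^ r) n, ← Real.rpow_mul hT0]
      ring_nf
    rcases max_choice r₁ r₂ with h | h
    · have hKr : T ^ ((n:ℝ) * r₁) * D ≤ K n r₁ := hKlowT n r₁ hr₁0 hr₁1 T hT1
      have hK2 : c₀ ≤ K n r₂ := hKlow n r₂ hr₂0 hr₂1
      have hK1pos : 0 ≤ T ^ ((n:ℝ) * r₁) * D := by positivity
      have hmm := mul_le_mul hKr hK2 hc₀.le (le_trans hK1pos hKr)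
      have hre : r = r₁ := by rw [hrdef, h]
      rw [hTrn, hre]
      nlinarith [hmm]
    · have hKr : T ^ ((n:ℝ) * r₂) * D ≤ K n r₂ := hKlowT n r₂ hr₂0 hr₂1 T hT1
      have hK1 : c₀ ≤ K n r₁ := hKlow n r₁ hr₁0 hr₁1
      have hK2pos : 0 ≤ T ^ ((n:ℝ) * r₂) * D := by positivity
      have hmm := mul_le_mul hK1 hKr hK2pos (le_trans hc₀.le hK1)
      have hre : r = r₂ := by rw [hrdef, h]
      rw [hTrn, hre]
      nlinarith [hmm]
  have hbound : ∀ k : ℕ, 2 ^ (k+1) * (c₀ * D * C) ≤ K 1 r₁ * K 1 r₂ := by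
    intro k
    have h1 : c₀ * D * (T ^ r) ^ (k+1) ≤ C ^ k * (K 1 r₁ * K 1 r₂) :=
      le_trans (hprod (k+1)) (hPn k)
    have h2 : ((2:ℝ) * C) ^ (k+1) ≤ (T ^ r) ^ (k+1) :=
      pow_le_pow_left₀ (by linarith) hTr _
    have h3 : c₀ * D * ((2 * C) ^ (k+1)) ≤ C ^ k * (K 1 r₁ * K 1 r₂) := by
      have := mul_le_mul_of_nonneg_left h2 (by positivity : (0:ℝ) ≤ c₀ * D)
      linarith
    have hCk : (0:ℝ) < C ^ k := by positivity
    have h4 : C ^ k * (2 ^ (k+1) * (c₀ * D * C)) ≤ C ^ k * (K 1 r₁ * K 1 r₂) := by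
      have he : c₀ * D * ((2 * C) ^ (k+1)) = C ^ k * (2 ^ (k+1) * (c₀ * D * C)) := by
        rw [mul_pow, pow_succ, pow_succ]
        ring
      linarith [h3, he.symm.le]
    exact le_of_mul_le_mul_left h4 hCk
  obtain ⟨j, hj⟩ := pow_unbounded_of_one_lt ((K 1 r₁ * K 1 r₂) / (c₀ * D * C)) (one_lt_two (α := ℝ))
  have hjj := hbound j
  have hcdC : (0:ℝ) < c₀ * D * C := by positivity
  have h2j : (K 1 r₁ * K 1 r₂) < 2 ^ j * (c₀ * D * C) := by
    rw [div_lt_iff₀ hcdC] at hj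
    linarith
  have hmono : (2:ℝ) ^ j ≤ 2 ^ (j+1) := by
    apply pow_le_pow_right₀ one_le_two; omega
  nlinarith [hjj, h2j, hmono, hcdC]

/-- For `r₁, r₂ ∈ [0,1]`, the moments `mₙ = (n!)² Kₙ(r₁) Kₙ(r₂)`, where
`Kₙ(r) = ∫_0^∞ (ln(1+x))^{nr} e^{-x} dx`, satisfy Carleman's condition; and if
`max r₁ r₂ > 0` they do not satisfy the quadratic rate of growth condition. -/
theorem carleman_for_general_powers
    (r₁ r₂ : ℝ) (hr₁ : r₁ ∈ Set.Icc (0 : ℝ) 1) (hr₂ : r₂ ∈ Set.Icc (0 : ℝ) 1)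
    (K : ℕ → ℝ → ℝ)
    (hK : ∀ n : ℕ, ∀ r : ℝ,
      K n r = ∫ x in Set.Ioi (0 : ℝ), (Real.log (1 + x)) ^ ((n : ℝ) * r) * Real.exp (-x))
    (m : ℕ → ℝ)
    (hm : ∀ n : ℕ, m n = (n.factorial : ℝ) ^ 2 * K n r₁ * K n r₂) :
    Tendsto (fun N : ℕ => ∑ n ∈ Finset.Icc 1 N, m n ^ (-(1 : ℝ) / (2 * n)))
      atTop atTop ∧
    (0 < max r₁ r₂ →
      ¬ ∃ C : ℝ, 0 < C ∧ ∀ n : ℕ, 1 ≤ n → m (n + 1) ≤ C * (n + 1) ^ 2 * m n) := by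
  obtain ⟨hr₁0, hr₁1⟩ := hr₁
  obtain ⟨hr₂0, hr₂1⟩ := hr₂
  have hc₀ : 0 < Real.exp (1 - Real.exp 1) := Real.exp_pos _
  have hKlowT : ∀ (n : ℕ) (r : ℝ), 0 ≤ r → r ≤ 1 → ∀ T : ℝ, 1 ≤ T →
      T ^ ((n:ℝ) * r) * Real.exp (1 - Real.exp T) ≤ K n r := by
    intro n r hr0 _ T hT
    rw [hK n r]
    exact lower_aux (by positivity) hT
  have hKlow : ∀ (n : ℕ) (r : ℝ), 0 ≤ r → r ≤ 1 → Real.exp (1 - Real.exp 1) ≤ K n r := by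
    intro n r hr0 hr1
    have := hKlowT n r hr0 hr1 1 le_rfl
    rwa [Real.one_rpow, one_mul] at this
  have hKup : ∀ (n : ℕ), 1 ≤ n → ∀ (r : ℝ), 0 ≤ r → r ≤ 1 →
      K n r ≤ (4 * Real.log (1 + 25 * (n:ℝ) ^ 2)) ^ n := by
    intro n hn r hr0 hr1
    rw [hK n r]
    exact upper_aux hn hr0 hr1
  exact ⟨part1_aux r₁ r₂ hr₁0 hr₁1 hr₂0 hr₂1 K _ hc₀ hKlow hKup m hm,
    part2_aux r₁ r₂ hr₁0 hr₁1 hr₂0 hr₂1 K _ hc₀ hKlowT hKlow m hm⟩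
end

section
/- Define K_n := ∫_0^∞ (ln(1+x))^n e^{-x} dx and m_{2n} := (n!)^2 K_n^2 for n ≥ 1 (the even-order moments of the symmetric random variable Y = ζ ξ₁ ξ₂ ln(1+η₁) ln(1+η₂), whose odd-order moments vanish). Then the sequence of even moments satisfies Carleman's condition for the Hamburger moment problem, ∑_{n=1}^∞ m_{2n}^{-1/(2n)} = ∞, but does not satisfy the even-order quadratic rate of growth condition: there is no constant C > 0 such that m_{2n+2} ≤ C (n+1)^2 m_{2n} for all n ≥ 1. -/
open MeasureTheory Filter Topology Real
open Set

lemma aux_integrable_pow_exp (n : ℕ) :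
    IntegrableOn (fun x : ℝ => x ^ n * Real.exp (-x)) (Ioi 0) := by
  have h := Real.GammaIntegral_convergent (s := (n : ℝ) + 1) (by positivity)
  refine (h.congr_fun ?_ measurableSet_Ioi)
  intro x hx
  simp only [add_sub_cancel_right, Real.rpow_natCast]
  ring

lemma aux_integral_pow_exp (n : ℕ) :
    ∫ x in Ioi (0:ℝ), x ^ n * Real.exp (-x) = n.factorial := by
  have h := Real.Gamma_eq_integral (s := (n : ℝ) + 1) (by positivity)
  have h2 : Real.Gamma ((n : ℝ) + 1) = n.factorial := Real.Gamma_nat_eq_factorial n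
  rw [h2] at h
  rw [h]
  apply setIntegral_congr_fun measurableSet_Ioi
  intro x hx
  simp only [add_sub_cancel_right, Real.rpow_natCast]
  ring

lemma aux_meas (n : ℕ) : Measurable (fun x : ℝ => (Real.log (1 + x)) ^ n * Real.exp (-x)) := by
  exact ((Real.measurable_log.comp (measurable_const.add measurable_id)).pow_const n).mul
    (Real.measurable_exp.comp measurable_id.neg)

lemma aux_integrable (n : ℕ) :
    IntegrableOn (fun x : ℝ => (Real.log (1 + x)) ^ n * Real.exp (-x)) (Ioi 0) := by
  refine (aux_integrable_pow_exp n).mono' ((aux_meas n).aestronglyMeasurable) ?_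
  filter_upwards [ae_restrict_mem measurableSet_Ioi] with x hx
  have hx0 : (0:ℝ) < x := hx
  have hl0 : 0 ≤ Real.log (1 + x) := Real.log_nonneg (by linarith)
  have hlx : Real.log (1 + x) ≤ x := by
    have := Real.log_le_sub_one_of_pos (show (0:ℝ) < 1 + x by linarith)
    linarith
  rw [Real.norm_eq_abs, abs_mul, abs_pow, abs_of_nonneg hl0, abs_of_pos (Real.exp_pos _)]
  exact mul_le_mul_of_nonneg_right (pow_le_pow_left₀ hl0 hlx n) (Real.exp_pos _).le

lemma aux_lower (n : ℕ) {a : ℝ} (ha : 0 < a) :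
    (Real.log (1 + a)) ^ n * Real.exp (-(a + 1)) ≤
      ∫ x in Ioi (0:ℝ), (Real.log (1 + x)) ^ n * Real.exp (-x) := by
  have h1 : (Real.log (1 + a)) ^ n * Real.exp (-(a + 1)) ≤
      ∫ x in Ioc a (a + 1), (Real.log (1 + x)) ^ n * Real.exp (-x) := by
    have hvol : (volume (Ioc a (a + 1))).toReal = 1 := by
      rw [Real.volume_Ioc]
      simp
    have := setIntegral_ge_of_const_le (s := Ioc a (a+1))
      (c := (Real.log (1 + a)) ^ n * Real.exp (-(a + 1)))
      measurableSet_Ioc (by simp [Real.volume_Ioc]) ?_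
      ((aux_integrable n).mono_set (fun x hx => lt_trans ha hx.1))
    · rw [measureReal_def, hvol, one_smul] at this; exact this
    · intro x hx
      have hx1 : a < x := hx.1
      have hx2 : x ≤ a + 1 := hx.2
      have hl0 : 0 ≤ Real.log (1 + a) := Real.log_nonneg (by linarith)
      refine mul_le_mul (pow_le_pow_left₀ hl0 (Real.log_le_log (by linarith) (by linarith)) n)
        (Real.exp_le_exp.2 (by linarith)) (Real.exp_pos _).le
        (pow_nonneg (Real.log_nonneg (by linarith)) n)
  refine h1.trans (setIntegral_mono_set (aux_integrable n) ?_ ?_)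
  · filter_upwards [ae_restrict_mem measurableSet_Ioi] with x hx
    have hx0 : (0:ℝ) < x := hx
    have hl0 : 0 ≤ Real.log (1 + x) := Real.log_nonneg (by linarith)
    positivity
  · exact HasSubset.Subset.eventuallyLE (fun x hx => lt_trans ha hx.1)

lemma aux_Kpos (n : ℕ) : 0 < ∫ x in Ioi (0:ℝ), (Real.log (1 + x)) ^ n * Real.exp (-x) := by
  refine lt_of_lt_of_le ?_ (aux_lower n (show (0:ℝ) < 1 by norm_num))
  have : (0:ℝ) < Real.log (1 + 1) := Real.log_pos (by norm_num)
  positivity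

lemma aux_two_pow {u v : ℝ} (hu : 0 ≤ u) (hv : 0 ≤ v) (n : ℕ) :
    (u + v) ^ n ≤ 2 ^ n * (u ^ n + v ^ n) := by
  rcases le_total u v with h | h
  · calc (u + v) ^ n ≤ (2 * v) ^ n := pow_le_pow_left₀ (by linarith) (by linarith) n
    _ = 2 ^ n * v ^ n := mul_pow 2 v n
    _ ≤ 2 ^ n * (u ^ n + v ^ n) := by
        have : (0:ℝ) ≤ u ^ n := pow_nonneg hu n
        have h2 : (0:ℝ) ≤ (2:ℝ) ^ n := by positivity
        nlinarith
  · calc (u + v) ^ n ≤ (2 * u) ^ n := pow_le_pow_left₀ (by linarith) (by linarith) n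
    _ = 2 ^ n * u ^ n := mul_pow 2 u n
    _ ≤ 2 ^ n * (u ^ n + v ^ n) := by
        have : (0:ℝ) ≤ v ^ n := pow_nonneg hv n
        have h2 : (0:ℝ) ≤ (2:ℝ) ^ n := by positivity
        nlinarith

lemma aux_log_le {B x : ℝ} (hB : 0 ≤ B) (hx : 0 ≤ x) :
    Real.log (1 + x) ≤ B + x * Real.exp (-B) := by
  have h1 : Real.log (1 + x) ≤ Real.log (Real.exp B * (1 + x * Real.exp (-B))) := by
    apply Real.log_le_log (by linarith)
    have : Real.exp B * (1 + x * Real.exp (-B)) = Real.exp B + x := by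
      rw [mul_add, mul_one, Real.exp_neg]
      field_simp
    rw [this]
    have := Real.one_le_exp hB
    linarith
  have hpos : (0:ℝ) < 1 + x * Real.exp (-B) := by
    have := Real.exp_pos (-B); nlinarith
  rw [Real.log_mul (Real.exp_ne_zero B) (ne_of_gt hpos), Real.log_exp] at h1
  have h2 : Real.log (1 + x * Real.exp (-B)) ≤ x * Real.exp (-B) := by
    have := Real.log_le_sub_one_of_pos hpos
    linarith
  linarith

lemma aux_exp_integrable : IntegrableOn (fun x : ℝ => Real.exp (-x)) (Ioi 0) := by
  have := exp_neg_integrableOn_Ioi 0 (b := 1) one_pos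
  simpa using this

lemma aux_upper (n : ℕ) {B : ℝ} (hB : 0 ≤ B) :
    (∫ x in Ioi (0:ℝ), (Real.log (1 + x)) ^ n * Real.exp (-x)) ≤
      2 ^ n * B ^ n + 2 ^ n * Real.exp (-B) ^ n * n.factorial := by
  have hint : IntegrableOn
      (fun x : ℝ => 2 ^ n * B ^ n * Real.exp (-x) + 2 ^ n * Real.exp (-B) ^ n * (x ^ n * Real.exp (-x)))
      (Ioi 0) := by
    exact (aux_exp_integrable.const_mul _).add ((aux_integrable_pow_exp n).const_mul _)
  have hmono : (∫ x in Ioi (0:ℝ), (Real.log (1 + x)) ^ n * Real.exp (-x)) ≤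
      ∫ x in Ioi (0:ℝ), (2 ^ n * B ^ n * Real.exp (-x) + 2 ^ n * Real.exp (-B) ^ n * (x ^ n * Real.exp (-x))) := by
    refine setIntegral_mono_on (aux_integrable n) hint measurableSet_Ioi ?_
    intro x hx
    have hx0 : (0:ℝ) < x := hx
    have h1 : Real.log (1 + x) ≤ B + x * Real.exp (-B) := aux_log_le hB hx0.le
    have hl0 : 0 ≤ Real.log (1 + x) := Real.log_nonneg (by linarith)
    have h2 : Real.log (1 + x) ^ n ≤ (B + x * Real.exp (-B)) ^ n := pow_le_pow_left₀ hl0 h1 n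
    have h3 : (B + x * Real.exp (-B)) ^ n ≤ 2 ^ n * (B ^ n + (x * Real.exp (-B)) ^ n) :=
      aux_two_pow hB (by positivity) n
    have h4 : Real.log (1 + x) ^ n * Real.exp (-x) ≤
        2 ^ n * (B ^ n + (x * Real.exp (-B)) ^ n) * Real.exp (-x) :=
      mul_le_mul_of_nonneg_right (h2.trans h3) (Real.exp_pos _).le
    calc Real.log (1 + x) ^ n * Real.exp (-x)
        ≤ 2 ^ n * (B ^ n + (x * Real.exp (-B)) ^ n) * Real.exp (-x) := h4
      _ = 2 ^ n * B ^ n * Real.exp (-x) + 2 ^ n * Real.exp (-B) ^ n * (x ^ n * Real.exp (-x)) := by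
          rw [mul_pow]; ring
  refine hmono.trans ?_
  rw [integral_add (aux_exp_integrable.const_mul _) ((aux_integrable_pow_exp n).const_mul _),
    integral_const_mul, integral_const_mul, integral_exp_neg_Ioi_zero, aux_integral_pow_exp, mul_one]

lemma aux_upper2 {n : ℕ} (hn : 3 ≤ n) :
    (∫ x in Ioi (0:ℝ), (Real.log (1 + x)) ^ n * Real.exp (-x)) ≤ (4 * Real.log n) ^ n := by
  have hn0 : (0:ℝ) < n := by positivity
  have hB1 : (1:ℝ) ≤ Real.log n := by
    have h3 : (3:ℝ) ≤ (n:ℝ) := by exact_mod_cast hn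
    have := Real.log_le_log (Real.exp_pos 1) (le_trans (Real.exp_one_lt_d9.le.trans (by norm_num)) h3)
    rwa [Real.log_exp] at this
  set B := Real.log n with hBdef
  have hB0 : (0:ℝ) ≤ B := by linarith
  have h1 := aux_upper n hB0
  have hexp : Real.exp (-B) = (n:ℝ)⁻¹ := by
    rw [Real.exp_neg, Real.exp_log hn0]
  have hfact : Real.exp (-B) ^ n * n.factorial ≤ 1 := by
    rw [hexp, inv_pow]
    rw [inv_mul_le_iff₀ (by positivity), mul_one]
    exact_mod_cast Nat.factorial_le_pow n
  have hBn : (1:ℝ) ≤ B ^ n := one_le_pow₀ hB1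
  have h2n : (0:ℝ) < 2 ^ n := by positivity
  calc (∫ x in Ioi (0:ℝ), (Real.log (1 + x)) ^ n * Real.exp (-x))
      ≤ 2 ^ n * B ^ n + 2 ^ n * Real.exp (-B) ^ n * n.factorial := h1
    _ ≤ 2 ^ n * B ^ n + 2 ^ n * B ^ n := by
        have : 2 ^ n * Real.exp (-B) ^ n * (n.factorial:ℝ) = 2 ^ n * (Real.exp (-B) ^ n * n.factorial) := by ring
        rw [this]
        have := mul_le_mul_of_nonneg_left (hfact.trans hBn) h2n.le
        linarith
    _ = 2 * 2 ^ n * B ^ n := by ring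
    _ ≤ 4 ^ n * B ^ n := by
        have h2 : (2:ℝ) * 2 ^ n ≤ 4 ^ n := by
          have : (4:ℝ) ^ n = 2 ^ n * 2 ^ n := by rw [← mul_pow]; norm_num
          rw [this]
          have : (2:ℝ) ≤ 2 ^ n := by
            calc (2:ℝ) = 2 ^ 1 := (pow_one 2).symm
            _ ≤ 2 ^ n := pow_le_pow_right₀ (by norm_num) (by omega)
          nlinarith
        nlinarith
    _ = (4 * B) ^ n := (mul_pow 4 B n).symm

lemma aux_not_summable : ¬ Summable (fun n : ℕ => ((n:ℝ) * Real.log n)⁻¹) := by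
  intro h
  set f : ℕ → ℝ := fun n => (((n:ℝ) + 2) * Real.log ((n:ℝ) + 2))⁻¹ with hf
  have hfs : Summable f := by
    have := (summable_nat_add_iff 2).2 h
    refine this.congr fun n => ?_
    simp only [hf]
    push_cast
    ring_nf
  have hnonneg : ∀ n, 0 ≤ f n := by
    intro n
    have h2 : (0:ℝ) < (n:ℝ) + 2 := by positivity
    have hl : 0 ≤ Real.log ((n:ℝ) + 2) := Real.log_nonneg (by linarith)
    positivity
  have hmono : ∀ ⦃p q : ℕ⦄, 0 < p → p ≤ q → f q ≤ f p := by
    intro p q _ hpq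
    have hp2 : (0:ℝ) < (p:ℝ) + 2 := by positivity
    have hpq' : (p:ℝ) + 2 ≤ (q:ℝ) + 2 := by
      have : (p:ℝ) ≤ q := by exact_mod_cast hpq
      linarith
    have hlp : 0 < Real.log ((p:ℝ) + 2) := Real.log_pos (by linarith)
    have hlq : Real.log ((p:ℝ) + 2) ≤ Real.log ((q:ℝ) + 2) := Real.log_le_log hp2 hpq'
    apply inv_anti₀ (by positivity)
    exact mul_le_mul hpq' hlq hlp.le (by linarith)
  have hcond := (summable_condensed_iff_of_nonneg hnonneg hmono).2 hfs
  -- 2^k * f (2^k) ≥ (3 * (k+2))⁻¹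
  have hcomp : Summable (fun k : ℕ => ((3:ℝ) * ((k:ℝ) + 2))⁻¹) := by
    refine Summable.of_nonneg_of_le (fun k => by positivity) (fun k => ?_) hcond
    have h2k : (1:ℝ) ≤ (2:ℝ) ^ k := one_le_pow₀ (by norm_num)
    have hcast : ((2 ^ k : ℕ) : ℝ) = (2:ℝ) ^ k := by push_cast; ring
    have hub : ((2:ℝ) ^ k + 2) * Real.log ((2:ℝ) ^ k + 2) ≤ 3 * 2 ^ k * ((k:ℝ) + 2) := by
      have hb1 : (2:ℝ) ^ k + 2 ≤ 3 * 2 ^ k := by linarith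
      have hb2 : Real.log ((2:ℝ) ^ k + 2) ≤ (k:ℝ) + 2 := by
        have hle : (2:ℝ) ^ k + 2 ≤ 2 ^ (k + 2) := by
          rw [pow_add]; norm_num; linarith
        have := Real.log_le_log (by positivity) hle
        refine this.trans ?_
        rw [Real.log_pow]
        have hlog2 : Real.log 2 ≤ 1 := by
          have := Real.log_le_sub_one_of_pos (by norm_num : (0:ℝ) < 2)
          linarith
        have : ((k:ℝ) + 2) * Real.log 2 ≤ ((k:ℝ) + 2) * 1 :=
          mul_le_mul_of_nonneg_left hlog2 (by positivity)
        push_cast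
        linarith
      have hl0 : 0 ≤ Real.log ((2:ℝ) ^ k + 2) := Real.log_nonneg (by linarith)
      calc ((2:ℝ) ^ k + 2) * Real.log ((2:ℝ) ^ k + 2)
          ≤ (3 * 2 ^ k) * (((k:ℝ)) + 2) := mul_le_mul hb1 hb2 hl0 (by positivity)
        _ = 3 * 2 ^ k * ((k:ℝ) + 2) := by ring
    have hpos : (0:ℝ) < ((2:ℝ) ^ k + 2) * Real.log ((2:ℝ) ^ k + 2) := by
      have : (0:ℝ) < Real.log ((2:ℝ) ^ k + 2) := Real.log_pos (by linarith)
      positivity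
    have hinv := inv_anti₀ hpos hub
    have h5 := mul_le_mul_of_nonneg_left hinv (by positivity : (0:ℝ) ≤ (2:ℝ) ^ k)
    have heq : (2:ℝ) ^ k * (3 * 2 ^ k * ((k:ℝ) + 2))⁻¹ = (3 * ((k:ℝ) + 2))⁻¹ := by
      rw [mul_inv, mul_inv]
      have h2kpos : (0:ℝ) < (2:ℝ) ^ k := by positivity
      field_simp
    simp only [hf, hcast]
    rw [heq] at h5
    exact h5
  have hcomp2 : Summable (fun k : ℕ => ((k:ℝ) + 2)⁻¹) := by
    have := hcomp.mul_left 3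
    refine this.congr fun k => ?_
    rw [mul_inv]
    have : (0:ℝ) < (k:ℝ) + 2 := by positivity
    field_simp
  have h' : Summable (fun k : ℕ => (((k + 2 : ℕ)):ℝ)⁻¹) :=
    hcomp2.congr fun k => by push_cast; ring
  exact Real.not_summable_natCast_inv ((summable_nat_add_iff 2).1 h')

/-- **Hamburger case.** The even-order moments `m_{2n} = (n!)² Kₙ²` (with
`Kₙ = ∫_0^∞ (ln(1+x))ⁿ e^{-x} dx`) of the symmetric random variable
`Y = ζ ξ₁ ξ₂ ln(1+η₁) ln(1+η₂)` satisfy Carleman's condition for the Hamburger moment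
problem, `∑ₙ m_{2n}^{-1/(2n)} = ∞`, but not the even-order quadratic rate of growth
condition `m_{2n+2} ≤ C (n+1)² m_{2n}`. -/
theorem hamburger_carleman_holds_quadratic_growth_fails
    (K : ℕ → ℝ)
    (hK : ∀ n : ℕ, K n = ∫ x in Set.Ioi (0 : ℝ), (Real.log (1 + x)) ^ n * Real.exp (-x))
    (m : ℕ → ℝ)
    (hm : ∀ n : ℕ, m (2 * n) = (n.factorial : ℝ) ^ 2 * K n ^ 2) :
    Tendsto (fun N : ℕ => ∑ n ∈ Finset.Icc 1 N, m (2 * n) ^ (-(1 : ℝ) / (2 * n)))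
      atTop atTop ∧
    ¬ ∃ C : ℝ, 0 < C ∧ ∀ n : ℕ, 1 ≤ n →
      m (2 * n + 2) ≤ C * (n + 1) ^ 2 * m (2 * n) := by
  have hKpos : ∀ n, 0 < K n := fun n => (hK n).symm ▸ aux_Kpos n
  have hKlow : ∀ (n : ℕ) {a : ℝ}, 0 < a →
      (Real.log (1 + a)) ^ n * Real.exp (-(a + 1)) ≤ K n := by
    intro n a ha; rw [hK n]; exact aux_lower n ha
  have hKup : ∀ {n : ℕ}, 3 ≤ n → K n ≤ (4 * Real.log n) ^ n := by
    intro n hn; rw [hK n]; exact aux_upper2 hn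
  set t : ℕ → ℝ := fun n => m (2 * n) ^ (-(1 : ℝ) / (2 * n)) with ht
  have hm0 : ∀ n, 0 < m (2 * n) := by
    intro n
    rw [hm n]
    have := hKpos n
    have : (0:ℝ) < (n.factorial : ℝ) := by exact_mod_cast n.factorial_pos
    positivity
  have ht0 : ∀ n, 0 ≤ t n := fun n => Real.rpow_nonneg (hm0 n).le _
  have hlow : ∀ n : ℕ, 3 ≤ n → (4 * (n:ℝ) * Real.log n)⁻¹ ≤ t n := by
    intro n hn
    have hn1 : (1:ℝ) < (n:ℝ) := by exact_mod_cast (by omega : 1 < n)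
    have hlogn : 0 < Real.log n := Real.log_pos hn1
    set c : ℝ := 4 * (n:ℝ) * Real.log n with hc
    have hcpos : 0 < c := by positivity
    have hmle : m (2 * n) ≤ c ^ (2 * n) := by
      rw [hm n]
      have h1 : (n.factorial : ℝ) ≤ (n:ℝ) ^ n := by exact_mod_cast Nat.factorial_le_pow n
      have h2 : K n ≤ (4 * Real.log n) ^ n := hKup hn
      have h3 : (n.factorial : ℝ) * K n ≤ (n:ℝ) ^ n * (4 * Real.log n) ^ n := by
        refine mul_le_mul h1 h2 (hKpos n).le (by positivity)
      have h4 : (n:ℝ) ^ n * (4 * Real.log n) ^ n = c ^ n := by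
        rw [← mul_pow]; congr 1; rw [hc]; ring
      have h5 : ((n.factorial : ℝ) * K n) ^ 2 ≤ (c ^ n) ^ 2 := by
        rw [← h4]
        have hnn : 0 ≤ (n.factorial : ℝ) * K n :=
          mul_nonneg (Nat.cast_nonneg _) (hKpos n).le
        exact pow_le_pow_left₀ hnn h3 2
      calc (n.factorial : ℝ) ^ 2 * K n ^ 2 = ((n.factorial : ℝ) * K n) ^ 2 := by ring
        _ ≤ (c ^ n) ^ 2 := h5
        _ = c ^ (2 * n) := by rw [← pow_mul]; ring_nf
    have hexp : m (2 * n) ^ ((1:ℝ) / (2 * (n:ℝ))) ≤ c := by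
      have h6 := Real.rpow_le_rpow (hm0 n).le hmle
        (by positivity : (0:ℝ) ≤ (1:ℝ) / (2 * (n:ℝ)))
      have h7 : ((c ^ (2 * n) : ℝ)) ^ ((1:ℝ) / (2 * (n:ℝ))) = c := by
        rw [← Real.rpow_natCast c (2 * n), ← Real.rpow_mul hcpos.le]
        push_cast
        rw [mul_one_div, div_self (by positivity : (2 * (n:ℝ)) ≠ 0), Real.rpow_one]
      rwa [h7] at h6
    have h8 : t n = (m (2 * n) ^ ((1:ℝ) / (2 * (n:ℝ))))⁻¹ := by
      rw [ht]
      simp only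
      rw [neg_div, Real.rpow_neg (hm0 n).le]
    rw [h8]
    exact inv_anti₀ (Real.rpow_pos_of_pos (hm0 n) _) hexp
  constructor
  · -- Carleman
    have hns : ¬ Summable t := by
      intro hs
      have h3 : Summable (fun k => t (k + 3)) := (summable_nat_add_iff 3).2 hs
      have h4 : Summable (fun k : ℕ => (4 * ((k:ℝ) + 3) * Real.log ((k:ℝ) + 3))⁻¹) := by
        refine Summable.of_nonneg_of_le (fun k => ?_) (fun k => ?_) h3
        · have hk0 : (0:ℝ) ≤ (k:ℝ) := Nat.cast_nonneg k
          have : (0:ℝ) < Real.log ((k:ℝ) + 3) := Real.log_pos (by linarith)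
          positivity
        · have := hlow (k + 3) (by omega)
          push_cast at this
          exact this
      have h5 : Summable (fun k : ℕ => ((((k + 3 : ℕ)):ℝ) * Real.log ((k + 3 : ℕ)))⁻¹) := by
        have := h4.mul_left 4
        refine this.congr fun k => ?_
        push_cast
        rw [mul_inv, mul_inv]
        have hk3 : (0:ℝ) < (k:ℝ) + 3 := by positivity
        have hk0 : (0:ℝ) ≤ (k:ℝ) := Nat.cast_nonneg k
        have hlk : (0:ℝ) < Real.log ((k:ℝ) + 3) := Real.log_pos (by linarith)
        field_simp
      exact aux_not_summable ((summable_nat_add_iff 3).1 h5)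
    have hshift : ¬ Summable (fun i => t (1 + i)) := by
      intro hs
      exact hns ((summable_nat_add_iff 1).1 (hs.congr fun i => by rw [add_comm]))
    have htend := (not_summable_iff_tendsto_nat_atTop_of_nonneg
      (fun i => ht0 (1 + i))).1 hshift
    refine htend.congr fun N => ?_
    rw [← Finset.Ico_add_one_right_eq_Icc, Finset.sum_Ico_eq_sum_range]
    exact Finset.sum_congr rfl fun i _ => by simp only [ht]
  · -- quadratic growth fails
    rintro ⟨C, hC0, hq⟩
    have hstep : ∀ n : ℕ, 1 ≤ n → K (n + 1) ^ 2 ≤ C * K n ^ 2 := by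
      intro n hn
      have h := hq n hn
      have e : 2 * n + 2 = 2 * (n + 1) := by ring
      rw [e, hm (n + 1), hm n] at h
      have hfact : ((n + 1).factorial : ℝ) = ((n:ℝ) + 1) * n.factorial := by
        rw [Nat.factorial_succ]; push_cast; ring
      rw [hfact] at h
      have hP : (0:ℝ) < ((n:ℝ) + 1) ^ 2 * (n.factorial : ℝ) ^ 2 := by
        have : (0:ℝ) < (n.factorial : ℝ) := by exact_mod_cast n.factorial_pos
        positivity
      by_contra hcon
      push_neg at hcon
      nlinarith [h, mul_lt_mul_of_pos_left hcon hP]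
    have hiter : ∀ j : ℕ, K (1 + j) ^ 2 ≤ C ^ j * K 1 ^ 2 := by
      intro j
      induction j with
      | zero => simp
      | succ j ih =>
        have h1 : K (1 + (j + 1)) ^ 2 ≤ C * K (1 + j) ^ 2 := by
          have := hstep (1 + j) (by omega)
          convert this using 3 <;> omega
        calc K (1 + (j + 1)) ^ 2 ≤ C * K (1 + j) ^ 2 := h1
          _ ≤ C * (C ^ j * K 1 ^ 2) := mul_le_mul_of_nonneg_left ih hC0.le
          _ = C ^ (j + 1) * K 1 ^ 2 := by ring
    set a : ℝ := Real.exp (C + 1) - 1 with ha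
    have ha0 : 0 < a := by
      have : (1:ℝ) < Real.exp (C + 1) := by
        calc (1:ℝ) = Real.exp 0 := Real.exp_zero.symm
          _ < Real.exp (C + 1) := Real.exp_lt_exp.2 (by linarith)
      rw [ha]; linarith
    have hlog : Real.log (1 + a) = C + 1 := by
      rw [ha]
      have : 1 + (Real.exp (C + 1) - 1) = Real.exp (C + 1) := by ring
      rw [this, Real.log_exp]
    set E : ℝ := Real.exp (-(a + 1)) with hE
    have hE0 : 0 < E := Real.exp_pos _
    have hKlow2 : ∀ n : ℕ, (C + 1) ^ n * E ≤ K n := by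
      intro n
      have := hKlow n ha0
      rwa [hlog] at this
    have hr1 : (1:ℝ) < (C + 1) ^ 2 / C := by
      rw [lt_div_iff₀ hC0]
      nlinarith
    obtain ⟨j, hj⟩ := pow_unbounded_of_one_lt (K 1 ^ 2 / ((C + 1) ^ 2 * E ^ 2)) hr1
    have hkey : ((C + 1) ^ 2) ^ j * ((C + 1) ^ 2 * E ^ 2) ≤ K 1 ^ 2 * C ^ j := by
      have h1 : (C + 1) ^ (1 + j) * E ≤ K (1 + j) := hKlow2 (1 + j)
      have h2 : ((C + 1) ^ (1 + j) * E) ^ 2 ≤ K (1 + j) ^ 2 := by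
        have hnn : (0:ℝ) ≤ (C + 1) ^ (1 + j) * E := by positivity
        exact pow_le_pow_left₀ hnn h1 2
      have h3 : ((C + 1) ^ (1 + j) * E) ^ 2 ≤ C ^ j * K 1 ^ 2 := h2.trans (hiter j)
      have h4 : ((C + 1) ^ (1 + j) * E) ^ 2
          = ((C + 1) ^ 2) ^ j * ((C + 1) ^ 2 * E ^ 2) := by
        rw [mul_pow, ← pow_mul, show (1 + j) * 2 = 2 + 2 * j from by ring, pow_add, pow_mul]
        ring
      rw [h4] at h3
      linarith
    have hcontra : ((C + 1) ^ 2 / C) ^ j ≤ K 1 ^ 2 / ((C + 1) ^ 2 * E ^ 2) := by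
      rw [div_pow, div_le_div_iff₀ (pow_pos hC0 j)
        (mul_pos (pow_pos (by linarith : (0:ℝ) < C + 1) 2) (pow_pos hE0 2))]
      exact hkey
    linarith
end
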